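/- arXiv:2603.06015 — 5 statements merged into one kernel-verified Lean document; each statement's English description precedes it below -/
import Mathlib

section
/- Let V be a restricted 𝔗_{min(d_0,…,d_{p−1})}-module with annihilating level (h, q) and v ∈ V. Then on the 𝔗-module M(V, a, d), for all l, m, k ∈ ℤ and all 1 ≤ i, j ≤ p−1: Ω^{(i,j,2h)}_{l,m} · v(k) = (−1)^h p^{2h} C(2h, h) (I_h² v)(pl+k+i+j), and Ω^{(i,j,s)}_{l,m} · v(k) = 0 for every s > 2h. -/
open Finsupp TensorProduct

attribute [local instance] LieRing.ofAssociativeRing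

/-! ### Abstract presentation of the twisted Heisenberg-Virasoro algebra -/

/-- The twisted Heisenberg-Virasoro algebra: a complex Lie algebra with basis
`{L n, I n, CL, CLI, CI : n ∈ ℤ}` and the prescribed brackets. -/
structure TwistedHV where
  T : Type
  [lieRing : LieRing T]
  [lieAlg : LieAlgebra ℂ T]
  L : ℤ → T
  I : ℤ → T
  CL : T
  CLI : T
  CI : T
  basis : Module.Basis (ℤ ⊕ ℤ ⊕ Fin 3) ℂ T
  basis_eq : ∀ x, basis x = Sum.elim L (Sum.elim I ![CL, CLI, CI]) x
  bracket_LL : ∀ m n : ℤ,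
    ⁅L m, L n⁆ = ((n : ℂ) - (m : ℂ)) • L (m + n) +
      (if m + n = 0 then (((m : ℂ) ^ 3 - (m : ℂ)) / 12) • CL else 0)
  bracket_LI : ∀ m n : ℤ,
    ⁅L m, I n⁆ = (n : ℂ) • I (m + n) +
      (if m + n = 0 then ((m : ℂ) ^ 2 + (m : ℂ)) • CLI else 0)
  bracket_II : ∀ m n : ℤ,
    ⁅I m, I n⁆ = if m + n = 0 then (m : ℂ) • CI else 0
  central_CL : ∀ x : T, ⁅CL, x⁆ = 0
  central_CLI : ∀ x : T, ⁅CLI, x⁆ = 0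
  central_CI : ∀ x : T, ⁅CI, x⁆ = 0

attribute [instance] TwistedHV.lieRing TwistedHV.lieAlg

/-- The gap-`p` Virasoro algebra: `Lg n` represents `L_{p n}`, `Ig m` represents `I_m`
for `m` not divisible by `p`, and `Cg j` represents the central element `C_j` for
`0 ≤ j ≤ ⌊p/2⌋`. -/
structure GapVirasoro (p : ℕ) where
  g : Type
  [lieRing : LieRing g]
  [lieAlg : LieAlgebra ℂ g]
  Lg : ℤ → g
  Ig : ℤ → g
  Cg : ℕ → g
  basis : Module.Basis (ℤ ⊕ {m : ℤ // ¬ ((p : ℤ) ∣ m)} ⊕ {j : ℕ // j ≤ p / 2}) ℂ g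
  basis_eq : ∀ x, basis x = Sum.elim Lg (Sum.elim (fun m => Ig m.1) (fun j => Cg j.1)) x
  bracket_LL : ∀ m n : ℤ,
    ⁅Lg m, Lg n⁆ = ((p : ℂ) * ((n : ℂ) - (m : ℂ))) • Lg (m + n) +
      (if m + n = 0 then (((m : ℂ) ^ 3 - (m : ℂ)) / 12) • Cg 0 else 0)
  bracket_LI : ∀ m b : ℤ, ¬ ((p : ℤ) ∣ b) →
    ⁅Lg m, Ig b⁆ = (b : ℂ) • Ig ((p : ℤ) * m + b)
  bracket_II : ∀ a b : ℤ, ¬ ((p : ℤ) ∣ a) → ¬ ((p : ℤ) ∣ b) →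
    ⁅Ig a, Ig b⁆ =
      if a + b = 0 then (a : ℂ) • Cg (min ((a % (p : ℤ)).toNat) (p - (a % (p : ℤ)).toNat)) else 0
  central_C : ∀ j : ℕ, j ≤ p / 2 → ∀ x : g, ⁅Cg j, x⁆ = 0

attribute [instance] GapVirasoro.lieRing GapVirasoro.lieAlg

/-- The mirror Heisenberg-Virasoro algebra: `h n` represents `h_{n + 1/2}`. -/
structure MirrorHV where
  M : Type
  [lieRing : LieRing M]
  [lieAlg : LieAlgebra ℂ M]
  d : ℤ → M
  h : ℤ → M
  c : M
  l : M
  basis : Module.Basis (ℤ ⊕ ℤ ⊕ Fin 2) ℂ M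
  basis_eq : ∀ x, basis x = Sum.elim d (Sum.elim h ![c, l]) x
  bracket_dd : ∀ m n : ℤ,
    ⁅d m, d n⁆ = ((m : ℂ) - (n : ℂ)) • d (m + n) +
      (if m + n = 0 then (((m : ℂ) ^ 3 - (m : ℂ)) / 12) • c else 0)
  bracket_dh : ∀ m n : ℤ, ⁅d m, h n⁆ = (-((n : ℂ) + 1 / 2)) • h (m + n)
  bracket_hh : ∀ m n : ℤ,
    ⁅h m, h n⁆ = if m + n + 1 = 0 then ((m : ℂ) + 1 / 2) • l else 0
  central_c : ∀ x : M, ⁅c, x⁆ = 0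
  central_l : ∀ x : M, ⁅l, x⁆ = 0

attribute [instance] MirrorHV.lieRing MirrorHV.lieAlg

/-! ### Representations of the subalgebras `𝔗ₙ` -/

/-- A module over the subalgebra `𝔗ₙ = span{L k, I (n+k) : k ∈ ℕ}` of the twisted
Heisenberg-Virasoro algebra, encoded through the action operators (`IV m` is only
meaningful, and only constrained, for `m ≥ n`). -/
structure THVRep (n : ℕ) where
  V : Type
  [addCommGroup : AddCommGroup V]
  [module : Module ℂ V]
  LV : ℕ → Module.End ℂ V
  IV : ℕ → Module.End ℂ V
  comm_LL : ∀ k l : ℕ, ⁅LV k, LV l⁆ = ((l : ℂ) - (k : ℂ)) • LV (k + l)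
  comm_LI : ∀ k l : ℕ, n ≤ l → ⁅LV k, IV l⁆ = (l : ℂ) • IV (k + l)
  comm_II : ∀ k l : ℕ, n ≤ k → n ≤ l → ⁅IV k, IV l⁆ = 0

attribute [instance] THVRep.addCommGroup THVRep.module

namespace THVRep

variable {n : ℕ}

/-- A `𝔗ₙ`-module is restricted if every vector is annihilated by `L m` and `I m`
for all sufficiently large `m`. -/
def Restricted (R : THVRep n) : Prop :=
  ∀ v : R.V, ∃ N : ℕ, ∀ m : ℕ, N ≤ m → R.LV m v = 0 ∧ R.IV m v = 0

/-- `V` has annihilating level `(h, q)` (with `h ≥ n`). -/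
def AnnLevel (R : THVRep n) (h q : ℕ) : Prop :=
  n ≤ h ∧ (∃ v : R.V, R.IV h v ≠ 0) ∧ (∃ v : R.V, R.LV q v ≠ 0) ∧
    (∀ k : ℕ, h < k → ∀ v : R.V, R.IV k v = 0) ∧
    (∀ k : ℕ, q < k → ∀ v : R.V, R.LV k v = 0)

/-- Irreducibility of a `𝔗ₙ`-module. -/
def IsSimple (R : THVRep n) : Prop :=
  (∃ v : R.V, v ≠ 0) ∧
  ∀ W : Submodule ℂ R.V,
    (∀ k : ℕ, ∀ v ∈ W, R.LV k v ∈ W) →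
    (∀ m : ℕ, n ≤ m → ∀ v ∈ W, R.IV m v ∈ W) →
    W = ⊥ ∨ W = ⊤

end THVRep

/-- Isomorphism of `𝔗_r`-modules (both sides regarded as `𝔗_r`-modules by restriction). -/
def RepIso {n₁ n₂ : ℕ} (R : THVRep n₁) (S : THVRep n₂) (r : ℕ) : Prop :=
  ∃ ψ : R.V ≃ₗ[ℂ] S.V,
    (∀ k : ℕ, ∀ v : R.V, ψ (R.LV k v) = S.LV k (ψ v)) ∧
    (∀ m : ℕ, r ≤ m → ∀ v : R.V, ψ (R.IV m v) = S.IV m (ψ v))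

/-- `min {d i : i ∈ P}` (junk value `0` if `P = ∅`). -/
def finsetMin (P : Finset ℕ) (d : ℕ → ℕ) : ℕ :=
  if h : P.Nonempty then P.inf' h d else 0

/-- `min (d 0, …, d (p-1))`. -/
def dmin (p : ℕ) (d : ℕ → ℕ) : ℕ := finsetMin (Finset.range p) d

/-- The set `P - P = {(i - j) mod p : i, j ∈ P}`. -/
def PdiffP (p : ℕ) (P : Finset ℕ) : Finset ℕ :=
  Finset.image₂ (fun i j : ℕ => (((i : ℤ) - (j : ℤ)) % (p : ℤ)).toNat) P P

/-- The index set `𝒫 = {k ∈ ℤ : k mod p ∈ P}`. -/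
def PIdx (p : ℕ) (P : Finset ℕ) : Type :=
  {k : ℤ // ((k % (p : ℤ)).toNat) ∈ P}

lemma mem_shift {P : Finset ℕ} {q r k : ℤ} (h : (((r + k) % q).toNat) ∈ P) (m : ℤ) :
    (((q * m + r + k) % q).toNat) ∈ P := by
  have e : q * m + r + k = r + k + m * q := by ring
  rw [e, Int.add_mul_emod_self_right]
  exact h

lemma mem_shift0 {P : Finset ℕ} {q k : ℤ} (h : ((k % q).toNat) ∈ P) (m : ℤ) :
    (((q * m + k) % q).toNat) ∈ P := by
  have e : q * m + k = k + m * q := by ring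
  rw [e, Int.add_mul_emod_self_right]
  exact h

/-- Shift of an index `k ∈ 𝒫` by `p * m`. -/
def shiftIdx0 {p : ℕ} {P : Finset ℕ} (k : PIdx p P) (m : ℤ) : PIdx p P :=
  ⟨(p : ℤ) * m + k.1, mem_shift0 k.2 m⟩

/-! ### Representations, irreducibility and isomorphism -/

/-- Irreducibility of a representation `ρ` of a complex Lie algebra. -/
def IsIrreducibleRep {g : Type} [LieRing g] [LieAlgebra ℂ g]
    {M : Type} [AddCommGroup M] [Module ℂ M]
    (ρ : g →ₗ⁅ℂ⁆ Module.End ℂ M) : Prop :=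
  (∃ w : M, w ≠ 0) ∧
  ∀ W : Submodule ℂ M, (∀ x : g, ∀ w ∈ W, ρ x w ∈ W) → W = ⊥ ∨ W = ⊤

/-- Isomorphism of two representations of the same complex Lie algebra. -/
def RepModIso {g : Type} [LieRing g] [LieAlgebra ℂ g]
    {M₁ M₂ : Type} [AddCommGroup M₁] [Module ℂ M₁] [AddCommGroup M₂] [Module ℂ M₂]
    (ρ₁ : g →ₗ⁅ℂ⁆ Module.End ℂ M₁) (ρ₂ : g →ₗ⁅ℂ⁆ Module.End ℂ M₂) : Prop :=
  ∃ φ : M₁ ≃ₗ[ℂ] M₂, ∀ (x : g) (w : M₁), φ (ρ₁ x w) = ρ₂ x (φ w)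

/-- The action formulas defining the `𝔗`-module `M(V, a, d)` on `V ⊗ ℂ[x^{±1}] = ℤ →₀ V`. -/
def IsTHVAction (T : TwistedHV) (p : ℕ) (d : ℕ → ℕ) (a : ℂ) {n : ℕ} (R : THVRep n)
    (ρ : T.T →ₗ⁅ℂ⁆ Module.End ℂ (ℤ →₀ R.V)) : Prop :=
  (∀ (m k : ℤ) (v : R.V),
    ρ (T.L m) (Finsupp.single k v) =
      (a + (k : ℂ)) • Finsupp.single (m + k) v +
      ∑ᶠ j : ℕ, (((m : ℂ) ^ (j + 1)) / ((j + 1).factorial : ℂ)) •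
        Finsupp.single (m + k) (R.LV j v)) ∧
  (∀ (b k : ℤ) (v : R.V),
    ρ (T.I b) (Finsupp.single k v) =
      ∑ᶠ j : ℕ, (((b : ℂ) ^ (j + d ((b % (p : ℤ)).toNat))) /
          ((j + d ((b % (p : ℤ)).toNat)).factorial : ℂ)) •
        Finsupp.single (b + k) (R.IV (j + d ((b % (p : ℤ)).toNat)) v)) ∧
  ρ T.CL = 0 ∧ ρ T.CLI = 0 ∧ ρ T.CI = 0

/-- The action formulas defining the `𝔤`-module `M(V, a, d, P)` on `V ⊗ ℂ[P]`. -/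
def IsGapAction {p : ℕ} (G : GapVirasoro p) (P : Finset ℕ) (d : ℕ → ℕ) (a : ℂ)
    {n : ℕ} (R : THVRep n)
    (ρ : G.g →ₗ⁅ℂ⁆ Module.End ℂ (PIdx p P →₀ R.V)) : Prop :=
  (∀ (m : ℤ) (k : PIdx p P) (v : R.V),
    ρ (G.Lg m) (Finsupp.single k v) =
      (a + (k.1 : ℂ)) • Finsupp.single (shiftIdx0 k m) v +
      ∑ᶠ j : ℕ, (((((p : ℤ) * m : ℤ) : ℂ) ^ (j + 1)) / ((j + 1).factorial : ℂ)) •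
        Finsupp.single (shiftIdx0 k m) (R.LV j v)) ∧
  (∀ (m : ℤ) (i : ℕ), 1 ≤ i → i ≤ p - 1 → ∀ (k : PIdx p P) (v : R.V),
    ρ (G.Ig ((p : ℤ) * m + (i : ℤ))) (Finsupp.single k v) =
      if h : ((((i : ℤ) + k.1) % (p : ℤ)).toNat) ∈ P then
        ∑ᶠ j : ℕ, (((((p : ℤ) * m + (i : ℤ) : ℤ) : ℂ) ^ (j + d i)) / ((j + d i).factorial : ℂ)) •
          Finsupp.single (⟨(p : ℤ) * m + (i : ℤ) + k.1, mem_shift h m⟩ : PIdx p P)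
            (R.IV (j + d i) v)
      else 0) ∧
  (∀ j : ℕ, j ≤ p / 2 → ρ (G.Cg j) = 0)

/-- The operator `Ω^{(i,j,s)}_{l,m}` as an element of the universal enveloping algebra. -/
noncomputable def OmegaU (T : TwistedHV) (p : ℕ) (i j : ℕ) (l m : ℤ) (s : ℕ) :
    UniversalEnvelopingAlgebra ℂ T.T :=
  ∑ k ∈ Finset.range (s + 1),
    ((-1 : ℂ) ^ (s - k) * (s.choose k : ℂ)) •
      ((UniversalEnvelopingAlgebra.ι ℂ (T.I ((p : ℤ) * l - (p : ℤ) * m - (p : ℤ) * k + (i : ℤ)))) *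
       (UniversalEnvelopingAlgebra.ι ℂ (T.I ((p : ℤ) * m + (p : ℤ) * k + (j : ℤ)))))

/-- The action of the operator `Ω^{(i,j,s)}_{l,m}` in a representation `ρ`, where `Iop`
is the family of elements `I_n`. -/
noncomputable def OmegaOp {g : Type} [LieRing g] [LieAlgebra ℂ g]
    {M : Type} [AddCommGroup M] [Module ℂ M]
    (ρ : g →ₗ⁅ℂ⁆ Module.End ℂ M) (Iop : ℤ → g) (p : ℕ) (i j : ℕ) (l m : ℤ) (s : ℕ) :
    Module.End ℂ M :=
  ∑ k ∈ Finset.range (s + 1),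
    ((-1 : ℂ) ^ (s - k) * (s.choose k : ℂ)) •
      (ρ (Iop ((p : ℤ) * l - (p : ℤ) * m - (p : ℤ) * k + (i : ℤ))) *
       ρ (Iop ((p : ℤ) * m + (p : ℤ) * k + (j : ℤ))))

/-- The module of intermediate series `A(α, β, γ, Q)` over the gap-2 Virasoro algebra. -/
def IsARep (G : GapVirasoro 2) (α β γ : ℂ) (Q : Finset ℕ)
    (ρ : G.g →ₗ⁅ℂ⁆ Module.End ℂ (PIdx 2 Q →₀ ℂ)) : Prop :=
  (∀ (m : ℤ) (k : PIdx 2 Q),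
    ρ (G.Lg m) (Finsupp.single k (1 : ℂ)) =
      (α + 2 * β * (m : ℂ) + (k.1 : ℂ)) • Finsupp.single (shiftIdx0 k m) (1 : ℂ)) ∧
  (∀ (m : ℤ) (k : PIdx 2 Q),
    ρ (G.Ig (((2 : ℕ) : ℤ) * m + 1) ) (Finsupp.single k (1 : ℂ)) =
      if h : (((1 + k.1) % ((2 : ℕ) : ℤ)).toNat) ∈ Q then
        (if k.1 % 2 = 0 then (1 : ℂ) else γ) •
          Finsupp.single (⟨((2 : ℕ) : ℤ) * m + 1 + k.1, mem_shift h m⟩ : PIdx 2 Q) (1 : ℂ)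
      else 0) ∧
  ρ (G.Cg 0) = 0 ∧ ρ (G.Cg 1) = 0

/-- An irreducible highest weight representation of the gap-2 Virasoro algebra of level
`(c, h, l)`, i.e. a copy of `L(c, h, l)`. -/
def IsHWRep {HW : Type} [AddCommGroup HW] [Module ℂ HW]
    (G : GapVirasoro 2) (c h l : ℂ) (ρ : G.g →ₗ⁅ℂ⁆ Module.End ℂ HW) : Prop :=
  IsIrreducibleRep ρ ∧
  ∃ w₀ : HW, w₀ ≠ 0 ∧ ρ (G.Lg 0) w₀ = h • w₀ ∧
    ρ (G.Cg 0) w₀ = c • w₀ ∧ ρ (G.Cg 1) w₀ = l • w₀ ∧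
    (∀ m : ℕ, 1 ≤ m → ρ (G.Lg (m : ℤ)) w₀ = 0 ∧ ρ (G.Ig (2 * (m : ℤ) - 1)) w₀ = 0)

/-- `ρ₂` is a subquotient of `ρ₁`: there is an invariant submodule `W` and an
equivariant surjection `W → M₂`. -/
def IsSubquotientRep {g : Type} [LieRing g] [LieAlgebra ℂ g]
    {M₁ M₂ : Type} [AddCommGroup M₁] [Module ℂ M₁] [AddCommGroup M₂] [Module ℂ M₂]
    (ρ₁ : g →ₗ⁅ℂ⁆ Module.End ℂ M₁) (ρ₂ : g →ₗ⁅ℂ⁆ Module.End ℂ M₂) : Prop :=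
  ∃ W : Submodule ℂ M₁, ∃ hW : ∀ x : g, ∀ w ∈ W, ρ₁ x w ∈ W,
    ∃ π : W →ₗ[ℂ] M₂, Function.Surjective π ∧
      ∀ (x : g) (w : M₁) (hw : w ∈ W), π ⟨ρ₁ x w, hW x w hw⟩ = ρ₂ x (π ⟨w, hw⟩)

section OmegaHelpers

open Polynomial

private lemma omega_fwd_eval (P : ℂ[X]) :
    fwdDiff 1 (fun x : ℕ => P.eval (x : ℂ)) =
      fun x : ℕ => (P.comp (X + C 1) - P).eval (x : ℂ) := by
  funext x
  simp only [fwdDiff, eval_sub, eval_comp, eval_add, eval_X, eval_C]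
  push_cast
  ring

private lemma omega_hasse_eval_one {P : ℂ[X]} {s n : ℕ} (hP : P.natDegree ≤ s + 1) (hn : s ≤ n) :
    (Polynomial.hasseDeriv n P).eval 1 = P.coeff n + ((1 + n).choose n : ℂ) * P.coeff (1 + n) := by
  have hdeg : (Polynomial.hasseDeriv n P).natDegree < 2 := by
    have := P.natDegree_hasseDeriv_le n
    omega
  rw [Polynomial.eval_eq_sum_range' hdeg]
  simp [Finset.sum_range_succ, Polynomial.hasseDeriv_coeff]

private lemma omega_Qdeg {P : ℂ[X]} {s : ℕ} (hP : P.natDegree ≤ s + 1) :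
    (P.comp (X + C 1) - P).natDegree ≤ s := by
  rw [Polynomial.natDegree_le_iff_coeff_eq_zero]
  intro m hm
  rw [coeff_sub, ← Polynomial.taylor_apply, Polynomial.taylor_coeff,
    omega_hasse_eval_one hP (by omega)]
  have h1 : P.coeff (1 + m) = 0 := Polynomial.coeff_eq_zero_of_natDegree_lt (by omega)
  rw [h1]
  ring

private lemma omega_Qcoeff {P : ℂ[X]} {s : ℕ} (hP : P.natDegree ≤ s + 1) :
    (P.comp (X + C 1) - P).coeff s = ((s : ℂ) + 1) * P.coeff (s + 1) := by
  rw [coeff_sub, ← Polynomial.taylor_apply, Polynomial.taylor_coeff,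
    omega_hasse_eval_one hP le_rfl]
  have : (1 + s).choose s = s + 1 := by
    rw [Nat.add_comm, Nat.choose_succ_self_right]
  rw [this]
  push_cast
  rw [Nat.add_comm 1 s]
  ring

private lemma omega_keySum' : ∀ (s : ℕ) (P : ℂ[X]), P.natDegree ≤ s →
    (fwdDiff 1)^[s] (fun x : ℕ => P.eval (x : ℂ)) 0 = (s.factorial : ℂ) * P.coeff s := by
  intro s
  induction s with
  | zero =>
    intro P hP
    simpa using (Polynomial.coeff_zero_eq_eval_zero P).symm
  | succ s ih =>
    intro P hP
    rw [Function.iterate_succ_apply, omega_fwd_eval, ih _ (omega_Qdeg hP), omega_Qcoeff hP]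
    rw [Nat.factorial_succ]
    push_cast
    ring

private lemma omega_keySum (s : ℕ) (P : ℂ[X]) (hP : P.natDegree ≤ s) :
    ∑ k ∈ Finset.range (s + 1), ((-1 : ℂ) ^ (s - k) * (s.choose k : ℂ)) * P.eval (k : ℂ)
      = (s.factorial : ℂ) * P.coeff s := by
  rw [← omega_keySum' s P hP, fwdDiff_iter_eq_sum_shift]
  apply Finset.sum_congr rfl
  intro k _
  rw [zsmul_eq_mul]
  push_cast [smul_eq_mul]
  ring

private lemma omega_binPow_natDegree_le (a A : ℂ) (U : ℕ) :
    ((C a * X + C A) ^ U).natDegree ≤ U := by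
  refine (Polynomial.natDegree_pow_le).trans ?_
  have := Polynomial.natDegree_linear_le (a := a) (b := A)
  nlinarith [this]

private lemma omega_prodPow_natDegree_le (a A b B : ℂ) (U T : ℕ) :
    ((C a * X + C A) ^ U * (C b * X + C B) ^ T).natDegree ≤ U + T :=
  Polynomial.natDegree_mul_le.trans
    (add_le_add (omega_binPow_natDegree_le a A U) (omega_binPow_natDegree_le b B T))

private lemma omega_prodPow_coeff_top (a A b B : ℂ) (ha : a ≠ 0) (hb : b ≠ 0) (U T : ℕ) :
    ((C a * X + C A) ^ U * (C b * X + C B) ^ T).coeff (U + T) = a ^ U * b ^ T := by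
  have h1 : ((C a * X + C A) ^ U).natDegree = U := by
    rw [Polynomial.natDegree_pow, Polynomial.natDegree_linear ha, mul_one]
  have h2 : ((C b * X + C B) ^ T).natDegree = T := by
    rw [Polynomial.natDegree_pow, Polynomial.natDegree_linear hb, mul_one]
  have := Polynomial.coeff_mul_degree_add_degree ((C a * X + C A) ^ U) ((C b * X + C B) ^ T)
  rw [h1, h2] at this
  rw [this, Polynomial.leadingCoeff_pow, Polynomial.leadingCoeff_pow,
    Polynomial.leadingCoeff_linear ha, Polynomial.leadingCoeff_linear hb]

private lemma omega_innerSum (p' A B : ℂ) (hp' : p' ≠ 0) (U T s : ℕ) (hUT : U + T ≤ s) :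
    ∑ k ∈ Finset.range (s + 1),
        ((-1 : ℂ) ^ (s - k) * (s.choose k : ℂ)) * ((-p' * k + A) ^ U * (p' * k + B) ^ T)
      = if U + T = s then (s.factorial : ℂ) * ((-p') ^ U * p' ^ T) else 0 := by
  have h := omega_keySum s ((C (-p') * X + C A) ^ U * (C p' * X + C B) ^ T)
    ((omega_prodPow_natDegree_le _ _ _ _ _ _).trans hUT)
  simp only [eval_mul, eval_pow, eval_add, eval_C, eval_X] at h
  rw [h]
  rcases eq_or_lt_of_le hUT with he | hlt
  · rw [if_pos he, ← he, omega_prodPow_coeff_top _ _ _ _ (neg_ne_zero.mpr hp') hp']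
  · rw [if_neg (by omega), Polynomial.coeff_eq_zero_of_natDegree_lt
      (lt_of_le_of_lt (omega_prodPow_natDegree_le _ _ _ _ _ _) hlt), mul_zero]

private lemma omega_res_toNat (p : ℕ) (hp : 0 < p) (m : ℤ) (i : ℕ) (hi : i < p) :
    (((p : ℤ) * m + (i : ℤ)) % (p : ℤ)).toNat = i := by
  have e : (p : ℤ) * m + (i : ℤ) = (i : ℤ) + (p : ℤ) * m := by ring
  rw [e, Int.add_mul_emod_self_left, Int.emod_eq_of_lt (by positivity) (by exact_mod_cast hi)]
  exact Int.toNat_natCast i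

end OmegaHelpers

/-- action of the operators `Ω^{(i,j,s)}_{l,m}` on the `𝔗`-module `M(V, a, d)`,
for `V` restricted with annihilating level `(h, q)`. -/
theorem omega_action_thv (p : ℕ) (hp : 1 < p) (T : TwistedHV) (a : ℂ)
    (d : ℕ → ℕ) (hd : ∀ i, d i ≤ 1)
    (R : THVRep (dmin p d)) (hres : R.Restricted) (h q : ℕ) (hlev : R.AnnLevel h q)
    (ρ : T.T →ₗ⁅ℂ⁆ Module.End ℂ (ℤ →₀ R.V)) (hρ : IsTHVAction T p d a R ρ)
    (v : R.V) (l m k : ℤ) (i j : ℕ)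
    (hi1 : 1 ≤ i) (hi2 : i ≤ p - 1) (hj1 : 1 ≤ j) (hj2 : j ≤ p - 1) :
    OmegaOp ρ T.I p i j l m (2 * h) (Finsupp.single k v) =
      ((-1 : ℂ) ^ h * (p : ℂ) ^ (2 * h) * ((2 * h).choose h : ℂ)) •
        Finsupp.single ((p : ℤ) * l + k + (i : ℤ) + (j : ℤ)) (R.IV h (R.IV h v)) ∧
    ∀ s : ℕ, 2 * h < s → OmegaOp ρ T.I p i j l m s (Finsupp.single k v) = 0 := by
    classical
  obtain ⟨hLact, hIact, hCLz, hCLIz, hCIz⟩ := hρ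
  obtain ⟨hnh, ⟨v₀, hv₀⟩, -, hIz, -⟩ := hlev
  have hp0 : 0 < p := by omega
  have hip : i < p := by omega
  have hjp : j < p := by omega
  have hpC : ((p : ℤ) : ℂ) ≠ 0 := by
    simp only [Int.cast_natCast, ne_eq, Nat.cast_eq_zero]
    omega
  -- Degenerate case: `h < d i` or `h < d j` leads to a contradiction.
  by_cases hdeg : d i ≤ h ∧ d j ≤ h
  case neg =>
    exfalso
    -- the bad index
    obtain ⟨i', hi'p, hi'⟩ : ∃ i' : ℕ, i' < p ∧ h < d i' := by
      rcases not_and_or.mp hdeg with hc | hc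
      · exact ⟨i, hip, by omega⟩
      · exact ⟨j, hjp, by omega⟩
    have hh0 : h = 0 := by have := hd i'; omega
    -- `ρ (T.I b) = 0` whenever the residue of `b` has `d`-value `> h`
    have zeroI : ∀ b : ℤ, h < d ((b % (p : ℤ)).toNat) → ρ (T.I b) = 0 := by
      intro b hb
      apply Finsupp.lhom_ext
      intro c w
      rw [hIact, LinearMap.zero_apply]
      apply finsum_eq_zero_of_forall_eq_zero
      intro t
      rw [hIz (t + d ((b % (p : ℤ)).toNat)) (by omega) w, Finsupp.single_zero, smul_zero]
    -- existence of a residue `r` with `d r = 0`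
    have hdmin0 : dmin p d = 0 := by omega
    obtain ⟨r, hrp, hr0⟩ : ∃ r : ℕ, r < p ∧ d r = 0 := by
      have hne : (Finset.range p).Nonempty := ⟨0, Finset.mem_range.mpr hp0⟩
      obtain ⟨r, hrmem, hreq⟩ := Finset.exists_mem_eq_inf' hne d
      refine ⟨r, Finset.mem_range.mp hrmem, ?_⟩
      have : dmin p d = d r := by
        rw [dmin, finsetMin, dif_pos hne]; exact hreq
      omega
    set b : ℤ := (p : ℤ) * 1 + (i' : ℤ) with hbdef
    have hbres : ((b % (p : ℤ)).toNat) = i' := omega_res_toNat p hp0 1 i' hi'p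
    have hbz : ρ (T.I b) = 0 := zeroI b (by rw [hbres]; exact hi')
    set m₀ : ℤ := (r : ℤ) - b with hm₀def
    have hbr : ρ (T.I (r : ℤ)) = 0 := by
      have hlie := ρ.map_lie (x := T.L m₀) (y := T.I b)
      have hmb : m₀ + b = (r : ℤ) := by omega
      have hexp : ρ (⁅T.L m₀, T.I b⁆) = ((b : ℤ) : ℂ) • ρ (T.I ((r : ℤ))) := by
        rw [T.bracket_LI m₀ b, hmb, map_add, map_smul]
        have hz : ρ (if (r : ℤ) = 0 then ((m₀ : ℂ) ^ 2 + (m₀ : ℂ)) • T.CLI else 0) = 0 := by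
          split
          · rw [map_smul, hCLIz, smul_zero]
          · exact ρ.map_zero
        rw [hz, add_zero]
      rw [hexp, hbz, lie_zero] at hlie
      have hbne : ((b : ℤ) : ℂ) ≠ 0 := by
        simp only [ne_eq, Int.cast_eq_zero]
        omega
      rcases smul_eq_zero.mp hlie with hc | hc
      · exact absurd hc hbne
      · exact hc
    -- but `ρ (T.I r)` is nonzero on `single 0 v₀`
    have hract := hIact (r : ℤ) 0 v₀
    have hrres : (((r : ℤ) % (p : ℤ)).toNat) = r := by
      have := omega_res_toNat p hp0 0 r hrp
      simpa using this
    rw [hrres, hr0, hbr, LinearMap.zero_apply] at hract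
    have hfin : ∑ᶠ u : ℕ, (((r : ℤ) : ℂ) ^ (u + 0) / ((u + 0).factorial : ℂ)) •
        Finsupp.single ((r : ℤ) + 0) (R.IV (u + 0) v₀)
        = Finsupp.single ((r : ℤ) + 0) (R.IV 0 v₀) := by
      rw [finsum_eq_single _ 0]
      · simp
      · intro u hu
        rw [hIz (u + 0) (by omega) v₀, Finsupp.single_zero, smul_zero]
    rw [hfin] at hract
    rw [← hh0] at hract
    exact hv₀ (by simpa using (Finsupp.single_eq_zero).mp hract.symm)
  case pos =>
  obtain ⟨hdi, hdj⟩ := hdeg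
  -- truncated action formula
  have actI : ∀ (b : ℤ) (i' : ℕ), ((b % (p : ℤ)).toNat = i') → d i' ≤ h → ∀ (c : ℤ) (w : R.V),
      ρ (T.I b) (Finsupp.single c w) =
        ∑ t ∈ Finset.range (h + 1 - d i'),
          (((b : ℂ) ^ (t + d i')) / (((t + d i').factorial : ℕ) : ℂ)) •
            Finsupp.single (b + c) (R.IV (t + d i') w) := by
    intro b i' hb hdi' c w
    rw [hIact, hb]
    apply finsum_eq_sum_of_support_subset
    intro t ht
    simp only [Function.mem_support] at ht
    simp only [Finset.coe_range, Set.mem_Iio]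
    by_contra hc
    apply ht
    rw [hIz (t + d i') (by omega) w, Finsupp.single_zero, smul_zero]
  -- full expansion of the Omega operator
  have actPair : ∀ s : ℕ, OmegaOp ρ T.I p i j l m s (Finsupp.single k v) =
      ∑ t ∈ Finset.range (h + 1 - d j), ∑ u ∈ Finset.range (h + 1 - d i),
        (∑ k' ∈ Finset.range (s + 1),
          ((-1 : ℂ) ^ (s - k') * (s.choose k' : ℂ)) *
          ((((p : ℤ) * l - (p : ℤ) * m - (p : ℤ) * (k' : ℤ) + (i : ℤ) : ℤ) : ℂ) ^ (u + d i) /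
            (((u + d i).factorial : ℕ) : ℂ)) *
          ((((p : ℤ) * m + (p : ℤ) * (k' : ℤ) + (j : ℤ) : ℤ) : ℂ) ^ (t + d j) /
            (((t + d j).factorial : ℕ) : ℂ))) •
        Finsupp.single ((p : ℤ) * l + k + (i : ℤ) + (j : ℤ)) (R.IV (u + d i) (R.IV (t + d j) v)) := by
    intro s
    rw [OmegaOp, LinearMap.sum_apply]
    have step : ∀ k' ∈ Finset.range (s + 1),
        (((-1 : ℂ) ^ (s - k') * (s.choose k' : ℂ)) •
          (ρ (T.I ((p : ℤ) * l - (p : ℤ) * m - (p : ℤ) * (k' : ℤ) + (i : ℤ))) *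
           ρ (T.I ((p : ℤ) * m + (p : ℤ) * (k' : ℤ) + (j : ℤ))))) (Finsupp.single k v)
        = ∑ t ∈ Finset.range (h + 1 - d j), ∑ u ∈ Finset.range (h + 1 - d i),
            (((-1 : ℂ) ^ (s - k') * (s.choose k' : ℂ)) *
            ((((p : ℤ) * l - (p : ℤ) * m - (p : ℤ) * (k' : ℤ) + (i : ℤ) : ℤ) : ℂ) ^ (u + d i) /
              (((u + d i).factorial : ℕ) : ℂ)) *
            ((((p : ℤ) * m + (p : ℤ) * (k' : ℤ) + (j : ℤ) : ℤ) : ℂ) ^ (t + d j) /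
              (((t + d j).factorial : ℕ) : ℂ))) •
            Finsupp.single ((p : ℤ) * l + k + (i : ℤ) + (j : ℤ))
              (R.IV (u + d i) (R.IV (t + d j) v)) := by
      intro k' _
      set b1 : ℤ := (p : ℤ) * l - (p : ℤ) * m - (p : ℤ) * (k' : ℤ) + (i : ℤ) with hb1
      set b2 : ℤ := (p : ℤ) * m + (p : ℤ) * (k' : ℤ) + (j : ℤ) with hb2
      have hres2 : ((b2 % (p : ℤ)).toNat) = j := by
        have e : b2 = (p : ℤ) * (m + (k' : ℤ)) + (j : ℤ) := by rw [hb2]; ring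
        rw [e]; exact omega_res_toNat p hp0 _ j hjp
      have hres1 : ((b1 % (p : ℤ)).toNat) = i := by
        have e : b1 = (p : ℤ) * (l - m - (k' : ℤ)) + (i : ℤ) := by rw [hb1]; ring
        rw [e]; exact omega_res_toNat p hp0 _ i hip
      rw [LinearMap.smul_apply, Module.End.mul_apply]
      rw [actI b2 j hres2 hdj k v]
      rw [map_sum]
      rw [Finset.smul_sum]
      refine Finset.sum_congr rfl fun t _ => ?_
      rw [map_smul, actI b1 i hres1 hdi (b2 + k) (R.IV (t + d j) v)]
      rw [Finset.smul_sum, Finset.smul_sum]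
      refine Finset.sum_congr rfl fun u _ => ?_
      have hidx : b1 + (b2 + k) = (p : ℤ) * l + k + (i : ℤ) + (j : ℤ) := by
        rw [hb1, hb2]; ring
      rw [hidx, smul_smul, smul_smul]
      congr 1
      ring
    rw [Finset.sum_congr rfl step, Finset.sum_comm]
    refine Finset.sum_congr rfl fun t _ => ?_
    rw [Finset.sum_comm]
    refine Finset.sum_congr rfl fun u _ => ?_
    rw [Finset.sum_smul]
  -- rewrite each inner sum via the finite-difference evaluation
  have innerEval : ∀ s t u : ℕ, t < h + 1 - d j → u < h + 1 - d i → (u + d i) + (t + d j) ≤ s →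
      (∑ k' ∈ Finset.range (s + 1),
          ((-1 : ℂ) ^ (s - k') * (s.choose k' : ℂ)) *
          ((((p : ℤ) * l - (p : ℤ) * m - (p : ℤ) * (k' : ℤ) + (i : ℤ) : ℤ) : ℂ) ^ (u + d i) /
            (((u + d i).factorial : ℕ) : ℂ)) *
          ((((p : ℤ) * m + (p : ℤ) * (k' : ℤ) + (j : ℤ) : ℤ) : ℂ) ^ (t + d j) /
            (((t + d j).factorial : ℕ) : ℂ)))
      = ((((u + d i).factorial : ℕ) : ℂ) * (((t + d j).factorial : ℕ) : ℂ))⁻¹ *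
          (if (u + d i) + (t + d j) = s then
            (s.factorial : ℂ) * ((-(p : ℂ)) ^ (u + d i) * (p : ℂ) ^ (t + d j)) else 0) := by
    intro s t u ht hu hle
    rw [← omega_innerSum ((p : ℕ) : ℂ) ((((p : ℤ) * l - (p : ℤ) * m + (i : ℤ) : ℤ)) : ℂ)
        ((((p : ℤ) * m + (j : ℤ) : ℤ)) : ℂ) (by exact_mod_cast hpC) (u + d i) (t + d j) s hle]
    rw [Finset.mul_sum]
    refine Finset.sum_congr rfl fun k' _ => ?_
    have e1 : (((p : ℤ) * l - (p : ℤ) * m - (p : ℤ) * (k' : ℤ) + (i : ℤ) : ℤ) : ℂ)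
        = -((p : ℕ) : ℂ) * (k' : ℂ) + (((p : ℤ) * l - (p : ℤ) * m + (i : ℤ) : ℤ) : ℂ) := by
      push_cast; ring
    have e2 : (((p : ℤ) * m + (p : ℤ) * (k' : ℤ) + (j : ℤ) : ℤ) : ℂ)
        = ((p : ℕ) : ℂ) * (k' : ℂ) + (((p : ℤ) * m + (j : ℤ) : ℤ) : ℂ) := by
      push_cast; ring
    rw [e1, e2]
    have hf1 : (((u + d i).factorial : ℕ) : ℂ) ≠ 0 := Nat.cast_ne_zero.mpr (Nat.factorial_ne_zero _)
    have hf2 : (((t + d j).factorial : ℕ) : ℂ) ≠ 0 := Nat.cast_ne_zero.mpr (Nat.factorial_ne_zero _)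
    field_simp
  constructor
  · -- s = 2 * h
    rw [actPair (2 * h)]
    rw [Finset.sum_eq_single_of_mem (h - d j) (Finset.mem_range.mpr (by omega))]
    · rw [Finset.sum_eq_single_of_mem (h - d i) (Finset.mem_range.mpr (by omega))]
      · rw [innerEval (2 * h) (h - d j) (h - d i) (by omega) (by omega) (by omega)]
        rw [if_pos (by omega)]
        have e1 : h - d i + d i = h := by omega
        have e2 : h - d j + d j = h := by omega
        rw [e1, e2]
        congr 1
        have hfac : ((2 * h).choose h : ℂ) * (h.factorial : ℂ) * (h.factorial : ℂ)
            = ((2 * h).factorial : ℂ) := by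
          have := Nat.choose_mul_factorial_mul_factorial (show h ≤ 2 * h by omega)
          have e : 2 * h - h = h := by omega
          rw [e] at this
          exact_mod_cast congrArg (Nat.cast : ℕ → ℂ) this
        have hfne : (h.factorial : ℂ) ≠ 0 := Nat.cast_ne_zero.mpr (Nat.factorial_ne_zero _)
        have hpow : (-((p : ℕ) : ℂ)) ^ h * ((p : ℕ) : ℂ) ^ h
            = (-1 : ℂ) ^ h * ((p : ℕ) : ℂ) ^ (2 * h) := by
          rw [neg_pow, two_mul, pow_add]
          ring
        rw [hpow, ← hfac]
        field_simp
      · intro u hu hne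
        rw [innerEval (2 * h) (h - d j) u (by omega) (Finset.mem_range.mp hu)
          (by have := Finset.mem_range.mp hu; omega)]
        rw [if_neg (by have := Finset.mem_range.mp hu; omega), mul_zero, zero_smul]
    · intro t ht hne
      apply Finset.sum_eq_zero
      intro u hu
      rw [innerEval (2 * h) t u (Finset.mem_range.mp ht) (Finset.mem_range.mp hu)
        (by have := Finset.mem_range.mp ht; have := Finset.mem_range.mp hu; omega)]
      rw [if_neg (by have := Finset.mem_range.mp ht; have := Finset.mem_range.mp hu; omega),
        mul_zero, zero_smul]
  · -- s > 2 * h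
    intro s hs
    rw [actPair s]
    apply Finset.sum_eq_zero
    intro t ht
    apply Finset.sum_eq_zero
    intro u hu
    rw [innerEval s t u (Finset.mem_range.mp ht) (Finset.mem_range.mp hu)
      (by have := Finset.mem_range.mp ht; have := Finset.mem_range.mp hu; omega)]
    rw [if_neg (by have := Finset.mem_range.mp ht; have := Finset.mem_range.mp hu; omega),
      mul_zero, zero_smul]
end

section
/- Let V be a restricted 𝔗_{min(d_0,…,d_{p−1})}-module with annihilating level (h, q), v ∈ V, and fix l, k ∈ ℤ, 1 ≤ i, j ≤ p−1 and s ∈ ℕ with s ≤ 2h. Then, on the 𝔗-module M(V, a, d), the function m ↦ Ω^{(i,j,s)}_{l,m} · v(k) is polynomial in m of degree at most 2h−s with coefficients in V ⊗ x^{pl+k+i+j}; that is, there exist u_0, …, u_{2h−s} ∈ V ⊗ x^{pl+k+i+j}, independent of m, with Ω^{(i,j,s)}_{l,m} · v(k) = Σ_{t=0}^{2h−s} m^t u_t for all m ∈ ℤ, and the top coefficient is u_{2h−s} = ((−1)^h p^{2h} (2h)! / ((h!)² (2h−s)!)) · (I_h² v)(pl+k+i+j). -/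
open Finsupp TensorProduct

attribute [local instance 100] LieRing.ofAssociativeRing

section AuxFD
open Polynomial


/-- Discrete difference operator on polynomials. -/
noncomputable def polyD (f : ℂ[X]) : ℂ[X] := Polynomial.taylor 1 f - f

lemma polyD_coeff (f : ℂ[X]) (n : ℕ) (hf : f.natDegree ≤ n + 1) :
    (polyD f).coeff n = ((n : ℂ) + 1) * f.coeff (n + 1) := by
  have hd : (hasseDeriv n f).natDegree < 2 := by
    have := natDegree_hasseDeriv_le f n
    omega
  have he : (hasseDeriv n f).eval 1 = f.coeff n + ((n : ℂ) + 1) * f.coeff (n + 1) := by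
    rw [eval_eq_sum_range' hd]
    rw [Finset.sum_range_succ, Finset.sum_range_one]
    simp [hasseDeriv_coeff, Nat.add_comm 1 n, Nat.choose_succ_self_right]
    try ring
  rw [polyD, coeff_sub, taylor_coeff, he]; ring

lemma polyD_natDegree_le (f : ℂ[X]) (D : ℕ) (hf : f.natDegree ≤ D + 1) :
    (polyD f).natDegree ≤ D := by
  rw [natDegree_le_iff_coeff_eq_zero]
  intro N hN
  have h1 : f.natDegree ≤ N + 1 := by omega
  rw [polyD_coeff f N h1, coeff_eq_zero_of_natDegree_lt (by omega), mul_zero]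

lemma polyD_iter_natDegree_le (f : ℂ[X]) (D s : ℕ) (hf : f.natDegree ≤ D) (hs : s ≤ D) :
    (polyD^[s] f).natDegree ≤ D - s := by
  induction s generalizing f D with
  | zero => simpa using hf
  | succ s ih =>
      rw [Function.iterate_succ_apply]
      have h1 : (polyD f).natDegree ≤ (D - 1) := by
        apply polyD_natDegree_le
        omega
      have := ih (polyD f) (D - 1) h1 (by omega)
      omega

lemma polyD_iter_coeff_top (f : ℂ[X]) (D s : ℕ) (hf : f.natDegree ≤ D) (hs : s ≤ D) :
    (polyD^[s] f).coeff (D - s) = (D.descFactorial s : ℂ) * f.coeff D := by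
  induction s generalizing f D with
  | zero => simp
  | succ s ih =>
      rw [Function.iterate_succ_apply]
      have hD : 1 ≤ D := by omega
      have h1 : (polyD f).natDegree ≤ D - 1 := polyD_natDegree_le f (D-1) (by omega)
      have h2 := ih (polyD f) (D - 1) h1 (by omega)
      have h3 : (polyD f).coeff (D - 1) = (((D - 1 : ℕ) : ℂ) + 1) * f.coeff (D - 1 + 1) :=
        polyD_coeff f (D - 1) (by omega)
      have hDs : D - (s+1) = D - 1 - s := by omega
      have hD1 : D - 1 + 1 = D := by omega
      rw [hDs, h2, h3, hD1]
      have hdf : (D.descFactorial (s+1) : ℂ) = ((D-1).descFactorial s : ℂ) * (((D - 1 : ℕ) : ℂ) + 1) := by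
        conv_lhs => rw [← hD1]
        rw [Nat.succ_descFactorial_succ]
        push_cast
        ring
      rw [hdf]; ring

lemma polyD_zero : polyD 0 = 0 := by simp [polyD]

lemma polyD_iter_zero_of_lt (f : ℂ[X]) (s : ℕ) (hf : f.natDegree < s) : polyD^[s] f = 0 := by
  obtain ⟨r, rfl⟩ : ∃ r, s = r + (f.natDegree + 1) := ⟨s - (f.natDegree + 1), by omega⟩
  rw [Function.iterate_add_apply]
  have h1 : polyD^[f.natDegree + 1] f = 0 := by
    rw [Function.iterate_succ_apply']
    have h0 : (polyD^[f.natDegree] f).natDegree ≤ 0 :=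
      polyD_iter_natDegree_le f f.natDegree f.natDegree le_rfl le_rfl |>.trans (by omega)
    rw [Polynomial.eq_C_of_natDegree_le_zero h0]
    simp [polyD, taylor_C]
  rw [h1]
  induction r with
  | zero => simp
  | succ r ih => rw [Function.iterate_succ_apply, polyD_zero]; exact ih (by omega)

lemma polyD_iter_eval (g : ℂ[X]) (s : ℕ) :
    (fun x : ℂ => (polyD^[s] g).eval x) = (fwdDiff (1:ℂ))^[s] (fun y : ℂ => g.eval y) := by
  induction s with
  | zero => rfl
  | succ s ih =>
      rw [Function.iterate_succ_apply', Function.iterate_succ_apply', ← ih]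
      funext x
      simp [polyD, fwdDiff, taylor_eval]

lemma polyD_iter_eval_sum (g : ℂ[X]) (s : ℕ) (x : ℂ) :
    (polyD^[s] g).eval x
      = ∑ k ∈ Finset.range (s + 1), ((-1 : ℂ) ^ (s - k) * (s.choose k : ℂ)) * g.eval (x + k) := by
  have := congrFun (polyD_iter_eval g s) x
  rw [this, fwdDiff_iter_eq_sum_shift]
  apply Finset.sum_congr rfl
  intro k _
  rw [zsmul_eq_mul]
  push_cast
  ring


noncomputable def gpoly (q u w : ℂ) (a b : ℕ) : ℂ[X] :=
  C (((a.factorial : ℂ) * (b.factorial : ℂ))⁻¹) * (C u - C q * X) ^ a * (C q * X + C w) ^ b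

lemma gpoly_natDegree_le (q u w : ℂ) (a b : ℕ) : (gpoly q u w a b).natDegree ≤ a + b := by
  have hP : (C u - C q * X).natDegree ≤ 1 := by
    apply le_trans (natDegree_sub_le _ _)
    simp [natDegree_C_mul_le, natDegree_X_le]
    exact le_trans (natDegree_C_mul_le _ _) natDegree_X_le
  have hQ : (C q * X + C w).natDegree ≤ 1 := by
    apply le_trans (natDegree_add_le _ _)
    simp
    exact le_trans (natDegree_C_mul_le _ _) natDegree_X_le
  calc (gpoly q u w a b).natDegree
      ≤ (C (((a.factorial : ℂ) * (b.factorial : ℂ))⁻¹) * (C u - C q * X) ^ a).natDegree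
        + ((C q * X + C w) ^ b).natDegree := natDegree_mul_le
    _ ≤ ((C u - C q * X) ^ a).natDegree + ((C q * X + C w) ^ b).natDegree := by
        gcongr; exact natDegree_C_mul_le _ _
    _ ≤ a * 1 + b * 1 := by
        gcongr
        · exact le_trans (natDegree_pow_le) (by gcongr)
        · exact le_trans (natDegree_pow_le) (by gcongr)
    _ ≤ a + b := by omega

lemma gpoly_eval (q u w : ℂ) (a b : ℕ) (x : ℂ) :
    (gpoly q u w a b).eval x
      = ((a.factorial : ℂ) * (b.factorial : ℂ))⁻¹ * (u - q * x) ^ a * (q * x + w) ^ b := by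
  simp [gpoly]

lemma gpoly_coeff_top (q u w : ℂ) (hq : q ≠ 0) (a b : ℕ) :
    (gpoly q u w a b).coeff (a + b)
      = ((a.factorial : ℂ) * (b.factorial : ℂ))⁻¹ * (-q) ^ a * q ^ b := by
  have hP : (C u - C q * X) = C (-q) * X + C u := by rw [map_neg]; ring
  have dP : (C (-q) * X + C u).natDegree = 1 := natDegree_linear (neg_ne_zero.2 hq)
  have dQ : (C q * X + C w).natDegree = 1 := natDegree_linear hq
  have lP : (C (-q) * X + C u).leadingCoeff = -q := leadingCoeff_linear (neg_ne_zero.2 hq)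
  have lQ : (C q * X + C w).leadingCoeff = q := leadingCoeff_linear hq
  have hPne : (C (-q) * X + C u) ≠ 0 := fun hz => by rw [hz] at dP; simp at dP
  have hQne : (C q * X + C w) ≠ 0 := fun hz => by rw [hz] at dQ; simp at dQ
  have hM : ((C (-q) * X + C u) ^ a * (C q * X + C w) ^ b).natDegree = a + b := by
    rw [natDegree_mul (pow_ne_zero _ hPne) (pow_ne_zero _ hQne), natDegree_pow, natDegree_pow,
      dP, dQ, mul_one, mul_one]
  have hc : ((C (-q) * X + C u) ^ a * (C q * X + C w) ^ b).coeff (a + b)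
      = (-q) ^ a * q ^ b := by
    rw [← hM, coeff_natDegree, leadingCoeff_mul, leadingCoeff_pow, leadingCoeff_pow, lP, lQ]
  rw [gpoly, mul_assoc, coeff_C_mul, hP, hc]
  ring


lemma resmod {p : ℕ} (hp : 0 < p) {r : ℕ} (hr : r < p) (t : ℤ) :
    (((p:ℤ) * t + (r:ℤ)) % (p:ℤ)).toNat = r := by
  have h1 : ((p:ℤ) * t + (r:ℤ)) % (p:ℤ) = ((r:ℤ) + t * (p:ℤ)) % (p:ℤ) := by ring_nf
  rw [h1, Int.add_mul_emod_self_right, Int.emod_eq_of_lt (by positivity) (by exact_mod_cast hr),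
    Int.toNat_natCast]

end AuxFD

open Polynomial in
/-- for `s ≤ 2h`, the function `m ↦ Ω^{(i,j,s)}_{l,m} · v(k)` on the `𝔗`-module
`M(V, a, d)` is polynomial in `m` of degree at most `2h - s`, with coefficients in
`V ⊗ x^{pl + k + i + j}` and with the prescribed leading coefficient. -/
theorem omega_polynomial_in_m (p : ℕ) (hp : 1 < p) (T : TwistedHV) (a : ℂ)
    (d : ℕ → ℕ) (hd : ∀ i, d i ≤ 1)
    (R : THVRep (dmin p d)) (hres : R.Restricted) (h q : ℕ) (hlev : R.AnnLevel h q)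
    (ρ : T.T →ₗ⁅ℂ⁆ Module.End ℂ (ℤ →₀ R.V)) (hρ : IsTHVAction T p d a R ρ)
    (v : R.V) (l k : ℤ) (i j : ℕ)
    (hi1 : 1 ≤ i) (hi2 : i ≤ p - 1) (hj1 : 1 ≤ j) (hj2 : j ≤ p - 1)
    (s : ℕ) (hs : s ≤ 2 * h) :
    ∃ u : ℕ → (ℤ →₀ R.V),
      (∀ t : ℕ, u t ∈ LinearMap.range
        (Finsupp.lsingle ((p : ℤ) * l + k + (i : ℤ) + (j : ℤ)) : R.V →ₗ[ℂ] ℤ →₀ R.V)) ∧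
      (∀ m : ℤ, OmegaOp ρ T.I p i j l m s (Finsupp.single k v) =
        ∑ t ∈ Finset.range (2 * h - s + 1), (m : ℂ) ^ t • u t) ∧
      u (2 * h - s) =
        (((-1 : ℂ) ^ h * (p : ℂ) ^ (2 * h) * ((2 * h).factorial : ℂ)) /
            (((h.factorial : ℂ)) ^ 2 * (((2 * h - s).factorial : ℂ)))) •
          Finsupp.single ((p : ℤ) * l + k + (i : ℤ) + (j : ℤ)) (R.IV h (R.IV h v)) := by
  classical
  obtain ⟨hρL, hρI, hCL, hCLI, hCI⟩ := hρ
  obtain ⟨hnh, hIh, hLq, Iann, Lann⟩ := hlev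
  have hp0 : 0 < p := by omega
  have hip : i < p := by omega
  have hjp : j < p := by omega
  have hpC : ((p:ℕ) : ℂ) ≠ 0 := Nat.cast_ne_zero.2 (by omega)
  -- Step 0: `d e ≤ h` for all `e < p`.
  have hdle : ∀ e : ℕ, e < p → d e ≤ h := by
    intro e hep
    by_contra hcon
    push_neg at hcon
    have hde1 : d e = 1 := by have := hd e; omega
    have hh0 : h = 0 := by have := hd e; omega
    have hIb : ∀ b : ℤ, ((b % (p:ℤ)).toNat) = e → ρ (T.I b) = 0 := by
      intro b hb
      apply Finsupp.lhom_ext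
      intro k' w'
      rw [LinearMap.zero_apply, hρI b k' w', hb, hde1]
      apply finsum_eq_zero_of_forall_eq_zero
      intro j'
      rw [Iann (j' + 1) (by omega) w', Finsupp.single_zero, smul_zero]
    have hIc : ∀ c : ℤ, c ≠ 0 → ρ (T.I c) = 0 := by
      intro c hc
      have hbmod : (((p:ℤ) + (e:ℤ)) % (p:ℤ)).toNat = e := by
        rw [show (p:ℤ) + (e:ℤ) = (p:ℤ) * 1 + (e:ℤ) from by ring]
        exact resmod hp0 hep 1
      have h0 : ρ (T.I ((p:ℤ) + (e:ℤ))) = 0 := hIb _ hbmod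
      have hbr := T.bracket_LI (c - ((p:ℤ) + (e:ℤ))) ((p:ℤ) + (e:ℤ))
      rw [show c - ((p:ℤ) + (e:ℤ)) + ((p:ℤ) + (e:ℤ)) = c from by ring] at hbr
      have hz : ρ ⁅T.L (c - ((p:ℤ) + (e:ℤ))), T.I ((p:ℤ) + (e:ℤ))⁆ = 0 := by
        rw [LieHom.map_lie, h0, lie_zero]
      rw [hbr, if_neg hc, add_zero, map_smul] at hz
      have hne : ((((p:ℤ) + (e:ℤ)) : ℤ) : ℂ) ≠ 0 := by
        have h1 : (0:ℤ) < (p:ℤ) + (e:ℤ) := by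
          have : (0:ℤ) < (p:ℤ) := by exact_mod_cast hp0
          omega
        exact_mod_cast h1.ne'
      exact (smul_eq_zero.mp hz).resolve_left hne
    have hne : (Finset.range p).Nonempty := ⟨0, Finset.mem_range.2 (by omega)⟩
    obtain ⟨i₀, hi₀mem, hi₀⟩ := Finset.exists_mem_eq_inf' hne d
    have hdm : dmin p d = d i₀ := by rw [dmin, finsetMin, dif_pos hne]; exact hi₀
    have hdi₀ : d i₀ = 0 := by have h1 := hnh; rw [hdm] at h1; omega
    have hi₀p : i₀ < p := Finset.mem_range.mp hi₀mem
    obtain ⟨v₀, hv₀⟩ := hIh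
    have h0 : ρ (T.I ((p:ℤ) + (i₀:ℤ))) = 0 := by
      refine hIc _ ?_
      have : (0:ℤ) < (p:ℤ) := by exact_mod_cast hp0
      omega
    have happ := LinearMap.congr_fun h0 (Finsupp.single (0:ℤ) v₀)
    rw [LinearMap.zero_apply, hρI] at happ
    have hmod : ((((p:ℤ) + (i₀:ℤ)) % (p:ℤ)).toNat) = i₀ := by
      rw [show (p:ℤ) + (i₀:ℤ) = (p:ℤ) * 1 + (i₀:ℤ) from by ring]
      exact resmod hp0 hi₀p 1
    rw [hmod, hdi₀] at happ
    have hsupp : (Function.support fun j' : ℕ =>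
        (((((p:ℤ) + (i₀:ℤ)) : ℤ) : ℂ) ^ (j' + 0) / ((j' + 0).factorial : ℂ)) •
          Finsupp.single ((p:ℤ) + (i₀:ℤ) + 0) (R.IV (j' + 0) v₀)) ⊆ ↑({0} : Finset ℕ) := by
      intro j' hj'
      simp only [Function.mem_support] at hj'
      by_contra hj0
      simp only [Finset.coe_singleton, Set.mem_singleton_iff] at hj0
      exact hj' (by rw [Iann (j' + 0) (by omega) v₀, Finsupp.single_zero, smul_zero])
    rw [finsum_eq_sum_of_support_subset _ hsupp, Finset.sum_singleton] at happ
    simp only [Nat.add_zero, pow_zero, Nat.factorial_zero, Nat.cast_one, div_one, one_smul] at happ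
    rw [Finsupp.single_eq_zero] at happ
    rw [hh0] at hv₀
    exact hv₀ happ
  have hdi : d i ≤ h := hdle i hip
  have hdj : d j ≤ h := hdle j hjp
  -- the action of `I b` on a single, as a finite sum
  have actI : ∀ (b k' : ℤ) (e : ℕ), e < p → ((b % (p:ℤ)).toNat = e) → ∀ w' : R.V,
      ρ (T.I b) (Finsupp.single k' w') = ∑ j' ∈ Finset.range (h+1),
        (((b : ℂ) ^ (j' + d e)) / ((j' + d e).factorial : ℂ)) •
          Finsupp.single (b + k') (R.IV (j' + d e) w') := by
    intro b k' e hep hbe w'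
    rw [hρI b k' w', hbe]
    apply finsum_eq_sum_of_support_subset
    intro j' hj'
    simp only [Function.mem_support] at hj'
    by_contra hj0
    simp only [Finset.coe_range, Set.mem_Iio] at hj0
    push_neg at hj0
    exact hj' (by rw [Iann (j' + d e) (by omega) w', Finsupp.single_zero, smul_zero])
  -- main expansion
  have main : ∀ m : ℤ, OmegaOp ρ T.I p i j l m s (Finsupp.single k v)
      = ∑ j₂ ∈ Finset.range (h+1), ∑ j₁ ∈ Finset.range (h+1),
          ((polyD^[s] (gpoly (p:ℂ) ((p:ℂ) * (l:ℂ) + (i:ℂ)) (j:ℂ) (j₂ + d i) (j₁ + d j))).eval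
              ((m:ℤ):ℂ)) •
            Finsupp.single ((p:ℤ) * l + k + (i:ℤ) + (j:ℤ))
              (R.IV (j₂ + d i) (R.IV (j₁ + d j) v)) := by
    intro m
    have hAe : ∀ k0 : ℕ,
        ((((p:ℤ) * l - (p:ℤ) * m - (p:ℤ) * (k0:ℤ) + (i:ℤ)) % (p:ℤ)).toNat) = i := by
      intro k0
      rw [show (p:ℤ) * l - (p:ℤ) * m - (p:ℤ) * (k0:ℤ) + (i:ℤ)
          = (p:ℤ) * (l - m - (k0:ℤ)) + (i:ℤ) from by ring]
      exact resmod hp0 hip _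
    have hBe : ∀ k0 : ℕ, ((((p:ℤ) * m + (p:ℤ) * (k0:ℤ) + (j:ℤ)) % (p:ℤ)).toNat) = j := by
      intro k0
      rw [show (p:ℤ) * m + (p:ℤ) * (k0:ℤ) + (j:ℤ) = (p:ℤ) * (m + (k0:ℤ)) + (j:ℤ) from by ring]
      exact resmod hp0 hjp _
    calc OmegaOp ρ T.I p i j l m s (Finsupp.single k v)
        = ∑ k0 ∈ Finset.range (s+1), ∑ j₁ ∈ Finset.range (h+1), ∑ j₂ ∈ Finset.range (h+1),
            (((-1 : ℂ) ^ (s - k0) * (s.choose k0 : ℂ))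
              * ((((p:ℤ) * m + (p:ℤ) * (k0:ℤ) + (j:ℤ) : ℤ) : ℂ) ^ (j₁ + d j)
                  / ((j₁ + d j).factorial : ℂ))
              * ((((p:ℤ) * l - (p:ℤ) * m - (p:ℤ) * (k0:ℤ) + (i:ℤ) : ℤ) : ℂ) ^ (j₂ + d i)
                  / ((j₂ + d i).factorial : ℂ))) •
              Finsupp.single ((p:ℤ) * l + k + (i:ℤ) + (j:ℤ))
                (R.IV (j₂ + d i) (R.IV (j₁ + d j) v)) := by
          rw [OmegaOp, LinearMap.sum_apply]
          refine Finset.sum_congr rfl fun k0 _ => ?_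
          rw [LinearMap.smul_apply, Module.End.mul_apply]
          rw [actI _ k j hjp (hBe k0) v, map_sum, Finset.smul_sum]
          refine Finset.sum_congr rfl fun j₁ _ => ?_
          rw [LinearMap.map_smul,
            actI _ (((p:ℤ) * m + (p:ℤ) * (k0:ℤ) + (j:ℤ)) + k) i hip (hAe k0) _,
            Finset.smul_sum, Finset.smul_sum]
          refine Finset.sum_congr rfl fun j₂ _ => ?_
          rw [smul_smul, smul_smul]
          rw [show ((p:ℤ) * l - (p:ℤ) * m - (p:ℤ) * (k0:ℤ) + (i:ℤ))
              + (((p:ℤ) * m + (p:ℤ) * (k0:ℤ) + (j:ℤ)) + k)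
              = (p:ℤ) * l + k + (i:ℤ) + (j:ℤ) from by ring]
      _ = ∑ j₂ ∈ Finset.range (h+1), ∑ j₁ ∈ Finset.range (h+1), ∑ k0 ∈ Finset.range (s+1),
            (((-1 : ℂ) ^ (s - k0) * (s.choose k0 : ℂ))
              * ((((p:ℤ) * m + (p:ℤ) * (k0:ℤ) + (j:ℤ) : ℤ) : ℂ) ^ (j₁ + d j)
                  / ((j₁ + d j).factorial : ℂ))
              * ((((p:ℤ) * l - (p:ℤ) * m - (p:ℤ) * (k0:ℤ) + (i:ℤ) : ℤ) : ℂ) ^ (j₂ + d i)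
                  / ((j₂ + d i).factorial : ℂ))) •
              Finsupp.single ((p:ℤ) * l + k + (i:ℤ) + (j:ℤ))
                (R.IV (j₂ + d i) (R.IV (j₁ + d j) v)) := by
          refine (Finset.sum_comm).trans ?_
          refine (Finset.sum_congr rfl fun j₁ _ => Finset.sum_comm).trans ?_
          exact Finset.sum_comm
      _ = ∑ j₂ ∈ Finset.range (h+1), ∑ j₁ ∈ Finset.range (h+1),
            ((polyD^[s] (gpoly (p:ℂ) ((p:ℂ) * (l:ℂ) + (i:ℂ)) (j:ℂ) (j₂ + d i) (j₁ + d j))).eval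
                ((m:ℤ):ℂ)) •
              Finsupp.single ((p:ℤ) * l + k + (i:ℤ) + (j:ℤ))
                (R.IV (j₂ + d i) (R.IV (j₁ + d j) v)) := by
          refine Finset.sum_congr rfl fun j₂ _ => Finset.sum_congr rfl fun j₁ _ => ?_
          rw [polyD_iter_eval_sum, Finset.sum_smul]
          refine Finset.sum_congr rfl fun k0 _ => ?_
          congr 1
          rw [gpoly_eval, mul_inv]
          push_cast
          ring
  refine ⟨fun t => ∑ j₂ ∈ Finset.range (h+1), ∑ j₁ ∈ Finset.range (h+1),
      ((polyD^[s] (gpoly (p:ℂ) ((p:ℂ) * (l:ℂ) + (i:ℂ)) (j:ℂ) (j₂ + d i) (j₁ + d j))).coeff t) •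
        Finsupp.single ((p:ℤ) * l + k + (i:ℤ) + (j:ℤ))
          (R.IV (j₂ + d i) (R.IV (j₁ + d j) v)), ?_, ?_, ?_⟩
  · intro t
    refine Submodule.sum_mem _ fun j₂ _ => Submodule.sum_mem _ fun j₁ _ =>
      Submodule.smul_mem _ _ ?_
    exact ⟨R.IV (j₂ + d i) (R.IV (j₁ + d j) v), Finsupp.lsingle_apply _ _⟩
  · intro m
    rw [main m]
    refine Eq.symm ?_
    calc ∑ t ∈ Finset.range (2*h - s + 1), ((m:ℤ):ℂ) ^ t •
          ∑ j₂ ∈ Finset.range (h+1), ∑ j₁ ∈ Finset.range (h+1),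
            ((polyD^[s] (gpoly (p:ℂ) ((p:ℂ) * (l:ℂ) + (i:ℂ)) (j:ℂ) (j₂ + d i) (j₁ + d j))).coeff
                t) •
              Finsupp.single ((p:ℤ) * l + k + (i:ℤ) + (j:ℤ))
                (R.IV (j₂ + d i) (R.IV (j₁ + d j) v))
        = ∑ t ∈ Finset.range (2*h - s + 1), ∑ j₂ ∈ Finset.range (h+1),
            ∑ j₁ ∈ Finset.range (h+1),
            (((polyD^[s] (gpoly (p:ℂ) ((p:ℂ) * (l:ℂ) + (i:ℂ)) (j:ℂ) (j₂ + d i) (j₁ + d j))).coeff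
                t) * ((m:ℤ):ℂ) ^ t) •
              Finsupp.single ((p:ℤ) * l + k + (i:ℤ) + (j:ℤ))
                (R.IV (j₂ + d i) (R.IV (j₁ + d j) v)) := by
          refine Finset.sum_congr rfl fun t _ => ?_
          rw [Finset.smul_sum]
          refine Finset.sum_congr rfl fun j₂ _ => ?_
          rw [Finset.smul_sum]
          refine Finset.sum_congr rfl fun j₁ _ => ?_
          rw [smul_smul]
          congr 1
          ring
      _ = ∑ j₂ ∈ Finset.range (h+1), ∑ j₁ ∈ Finset.range (h+1),
            ∑ t ∈ Finset.range (2*h - s + 1),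
            (((polyD^[s] (gpoly (p:ℂ) ((p:ℂ) * (l:ℂ) + (i:ℂ)) (j:ℂ) (j₂ + d i) (j₁ + d j))).coeff
                t) * ((m:ℤ):ℂ) ^ t) •
              Finsupp.single ((p:ℤ) * l + k + (i:ℤ) + (j:ℤ))
                (R.IV (j₂ + d i) (R.IV (j₁ + d j) v)) := by
          rw [Finset.sum_comm]
          exact Finset.sum_congr rfl fun j₂ _ => Finset.sum_comm
      _ = ∑ j₂ ∈ Finset.range (h+1), ∑ j₁ ∈ Finset.range (h+1),
            ((polyD^[s] (gpoly (p:ℂ) ((p:ℂ) * (l:ℂ) + (i:ℂ)) (j:ℂ) (j₂ + d i) (j₁ + d j))).eval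
                ((m:ℤ):ℂ)) •
              Finsupp.single ((p:ℤ) * l + k + (i:ℤ) + (j:ℤ))
                (R.IV (j₂ + d i) (R.IV (j₁ + d j) v)) := by
          refine Finset.sum_congr rfl fun j₂ _ => Finset.sum_congr rfl fun j₁ _ => ?_
          rw [← Finset.sum_smul]
          by_cases hab : j₂ + d i ≤ h ∧ j₁ + d j ≤ h
          · congr 1
            have hdeg : (polyD^[s]
                (gpoly (p:ℂ) ((p:ℂ) * (l:ℂ) + (i:ℂ)) (j:ℂ) (j₂ + d i) (j₁ + d j))).natDegree
                < 2*h - s + 1 := by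
              have h2 : (gpoly (p:ℂ) ((p:ℂ) * (l:ℂ) + (i:ℂ)) (j:ℂ)
                  (j₂ + d i) (j₁ + d j)).natDegree ≤ 2*h :=
                le_trans (gpoly_natDegree_le _ _ _ _ _) (by omega)
              have := polyD_iter_natDegree_le _ (2*h) s h2 hs
              omega
            exact (eval_eq_sum_range' hdeg _).symm
          · have hw : R.IV (j₂ + d i) (R.IV (j₁ + d j) v) = 0 := by
              rcases not_and_or.mp hab with hca | hcb
              · exact Iann _ (by omega) _
              · rw [Iann _ (by omega) v, map_zero]
            rw [hw, Finsupp.single_zero, smul_zero, smul_zero]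
  · -- top coefficient
    have hzero : ∀ j₂ ∈ Finset.range (h+1), ∀ j₁ ∈ Finset.range (h+1),
        (j₂ ≠ h - d i ∨ j₁ ≠ h - d j) →
        ((polyD^[s] (gpoly (p:ℂ) ((p:ℂ) * (l:ℂ) + (i:ℂ)) (j:ℂ) (j₂ + d i) (j₁ + d j))).coeff
            (2*h - s)) •
          Finsupp.single ((p:ℤ) * l + k + (i:ℤ) + (j:ℤ))
            (R.IV (j₂ + d i) (R.IV (j₁ + d j) v)) = 0 := by
      intro j₂ hj₂ j₁ hj₁ hne
      by_cases hab : j₂ + d i ≤ h ∧ j₁ + d j ≤ h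
      · have hlt : (j₂ + d i) + (j₁ + d j) ≤ 2*h - 1 := by
          simp only [Finset.mem_range] at hj₂ hj₁
          rcases hne with hne | hne <;> omega
        have hz : ((polyD^[s]
            (gpoly (p:ℂ) ((p:ℂ) * (l:ℂ) + (i:ℂ)) (j:ℂ) (j₂ + d i) (j₁ + d j))).coeff
            (2*h - s)) = 0 := by
          set G := gpoly (p:ℂ) ((p:ℂ) * (l:ℂ) + (i:ℂ)) (j:ℂ) (j₂ + d i) (j₁ + d j) with hG
          by_cases hlt2 : G.natDegree < s
          · rw [polyD_iter_zero_of_lt _ _ hlt2, Polynomial.coeff_zero]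
          · push_neg at hlt2
            have hD : G.natDegree ≤ 2*h - 1 :=
              le_trans (gpoly_natDegree_le _ _ _ _ _) hlt
            have hd2 := polyD_iter_natDegree_le G (2*h-1) s hD (le_trans hlt2 hD)
            refine Polynomial.coeff_eq_zero_of_natDegree_lt ?_
            have hs1 : s ≤ 2*h - 1 := le_trans hlt2 hD
            omega
        rw [hz, zero_smul]
      · have hw : R.IV (j₂ + d i) (R.IV (j₁ + d j) v) = 0 := by
          rcases not_and_or.mp hab with hca | hcb
          · exact Iann _ (by omega) _
          · rw [Iann _ (by omega) v, map_zero]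
        rw [hw, Finsupp.single_zero, smul_zero]
    show (∑ j₂ ∈ Finset.range (h+1), ∑ j₁ ∈ Finset.range (h+1),
        ((polyD^[s] (gpoly (p:ℂ) ((p:ℂ) * (l:ℂ) + (i:ℂ)) (j:ℂ) (j₂ + d i) (j₁ + d j))).coeff
            (2*h - s)) •
          Finsupp.single ((p:ℤ) * l + k + (i:ℤ) + (j:ℤ))
            (R.IV (j₂ + d i) (R.IV (j₁ + d j) v)))
      = (((-1 : ℂ) ^ h * (p : ℂ) ^ (2 * h) * ((2 * h).factorial : ℂ)) /
            (((h.factorial : ℂ)) ^ 2 * (((2 * h - s).factorial : ℂ)))) •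
          Finsupp.single ((p : ℤ) * l + k + (i : ℤ) + (j : ℤ)) (R.IV h (R.IV h v))
    rw [Finset.sum_eq_single_of_mem (h - d i) (Finset.mem_range.2 (by omega))
      (fun j₂ hj₂ hne => Finset.sum_eq_zero fun j₁ hj₁ => hzero j₂ hj₂ j₁ hj₁ (Or.inl hne))]
    rw [Finset.sum_eq_single_of_mem (h - d j) (Finset.mem_range.2 (by omega))
      (fun j₁ hj₁ hne => hzero (h - d i) (Finset.mem_range.2 (by omega)) j₁ hj₁ (Or.inr hne))]
    have e2 : h - d i + d i = h := by omega
    have e3 : h - d j + d j = h := by omega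
    rw [e2, e3]
    have hg2 : (gpoly (p:ℂ) ((p:ℂ) * (l:ℂ) + (i:ℂ)) (j:ℂ) h h).natDegree ≤ 2*h :=
      le_trans (gpoly_natDegree_le _ _ _ _ _) (by omega)
    have hcoef := polyD_iter_coeff_top (gpoly (p:ℂ) ((p:ℂ) * (l:ℂ) + (i:ℂ)) (j:ℂ) h h)
      (2*h) s hg2 hs
    have hct := gpoly_coeff_top (p:ℂ) ((p:ℂ) * (l:ℂ) + (i:ℂ)) (j:ℂ) hpC h h
    rw [show h + h = 2*h from by ring] at hct
    rw [hcoef, hct]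
    congr 1
    have hfact2 : (((2*h - s).factorial : ℂ)) ≠ 0 := Nat.cast_ne_zero.2 (Nat.factorial_ne_zero _)
    have hfacth : ((h.factorial : ℂ)) ≠ 0 := Nat.cast_ne_zero.2 (Nat.factorial_ne_zero _)
    have key : (((2*h - s).factorial : ℕ) : ℂ) * (((2*h).descFactorial s : ℕ) : ℂ)
        = (((2*h).factorial : ℕ) : ℂ) := by
      exact_mod_cast congrArg (Nat.cast : ℕ → ℂ) (Nat.factorial_mul_descFactorial hs)
    have hdesc : (((2*h).descFactorial s : ℕ) : ℂ)
        = (((2*h).factorial : ℕ) : ℂ) / (((2*h - s).factorial : ℕ) : ℂ) := by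
      rw [eq_div_iff hfact2, mul_comm]
      exact key
    rw [hdesc]
    field_simp
    ring
end

section
/- Let a ∈ ℂ, h, q ∈ ℕ, d = (d_0,…,d_{p−1}) ∈ {0,1}^p, and let V be a 𝔗_{min(d_0,…,d_{p−1})}-module with annihilating level (h, q). Then the 𝔗-module M(V, a, d) is irreducible if and only if V is an irreducible 𝔗_{min(d_0,…,d_{p−1})}-module. -/
open Finsupp TensorProduct

attribute [local instance 100] LieRing.ofAssociativeRing

section Aux
variable {V : Type} [AddCommGroup V] [Module ℂ V]

lemma vand_mem (U : Submodule ℂ V) {n : ℕ} (x : Fin n → ℂ) (hx : Function.Injective x)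
    (φ : Fin n → V) (hv : ∀ m, (∑ e : Fin n, x m ^ (e : ℕ) • φ e) ∈ U) : ∀ e, φ e ∈ U := by
  classical
  set A := Matrix.vandermonde x with hA
  have hdet : A.det ≠ 0 := by
    rw [hA, Matrix.det_vandermonde]
    refine Finset.prod_ne_zero_iff.mpr fun i _ => Finset.prod_ne_zero_iff.mpr fun j hj => ?_
    have hij : i ≠ j := ne_of_lt (Finset.mem_Ioi.mp hj)
    exact sub_ne_zero.mpr fun hEq => hij (hx hEq).symm
  have hinv : A⁻¹ * A = 1 := Matrix.nonsing_inv_mul A (isUnit_iff_ne_zero.mpr hdet)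
  intro e
  have key : φ e = ∑ m : Fin n, (A⁻¹ e m) • (∑ f : Fin n, x m ^ (f : ℕ) • φ f) := by
    have h1 : ∀ m : Fin n, (A⁻¹ e m) • (∑ f : Fin n, x m ^ (f : ℕ) • φ f)
        = ∑ f : Fin n, (A⁻¹ e m * A m f) • φ f := by
      intro m
      rw [Finset.smul_sum]
      exact Finset.sum_congr rfl fun f _ => by
        rw [smul_smul, hA, Matrix.vandermonde_apply]
    rw [Finset.sum_congr rfl fun m _ => h1 m, Finset.sum_comm]
    have h2 : ∀ f : Fin n, (∑ m : Fin n, (A⁻¹ e m * A m f) • φ f) = ((A⁻¹ * A) e f) • φ f := by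
      intro f
      rw [Matrix.mul_apply, Finset.sum_smul]
    rw [Finset.sum_congr rfl fun f _ => h2 f, hinv]
    rw [Finset.sum_eq_single e (fun f _ hf => by
      rw [Matrix.one_apply_ne (Ne.symm hf), zero_smul]) (fun he => absurd (Finset.mem_univ e) he)]
    rw [Matrix.one_apply_eq, one_smul]
  rw [key]
  exact Submodule.sum_mem _ fun m _ => Submodule.smul_mem _ _ (hv m)

lemma poly_mem (U : Submodule ℂ V) {ι : Type} [DecidableEq ι] (S : Finset ι)
    (g : ι → Polynomial ℂ) (w : ι → V) (x : ℕ → ℂ) (hx : Function.Injective x)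
    (hval : ∀ m : ℕ, (∑ i ∈ S, (g i).eval (x m) • w i) ∈ U) :
    ∀ e : ℕ, (∑ i ∈ S, (g i).coeff e • w i) ∈ U := by
  classical
  have hdeg : ∀ i ∈ S, (g i).natDegree < (S.sup fun i => (g i).natDegree) + 1 := fun i hi =>
    Nat.lt_succ_of_le (Finset.le_sup (f := fun i => (g i).natDegree) hi)
  set n := (S.sup fun i => (g i).natDegree) + 1 with hn
  set φ : Fin n → V := fun e => ∑ i ∈ S, (g i).coeff (e : ℕ) • w i with hφ
  have hval' : ∀ m : Fin n, (∑ e : Fin n, (x (m : ℕ)) ^ (e : ℕ) • φ e) ∈ U := by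
    intro m
    have heq : ∑ e : Fin n, (x (m : ℕ)) ^ (e : ℕ) • φ e
        = ∑ i ∈ S, (g i).eval (x (m : ℕ)) • w i := by
      rw [hφ]
      simp_rw [Finset.smul_sum, smul_smul]
      rw [Finset.sum_comm]
      refine Finset.sum_congr rfl fun i hi => ?_
      rw [Polynomial.eval_eq_sum_range' (hdeg i hi), Finset.sum_smul,
        ← Fin.sum_univ_eq_sum_range]
      exact Finset.sum_congr rfl fun e _ => by rw [mul_comm, mul_smul]
    rw [heq]; exact hval _
  have hφU := vand_mem U (fun m : Fin n => x (m : ℕ))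
    (fun a b hab => Fin.ext (by exact_mod_cast hx hab)) φ hval'
  intro e
  by_cases he : e < n
  · exact hφU ⟨e, he⟩
  · have hz : ∀ i ∈ S, (g i).coeff e = 0 := fun i hi =>
      Polynomial.coeff_eq_zero_of_natDegree_lt (lt_of_lt_of_le (hdeg i hi) (not_lt.mp he))
    rw [Finset.sum_eq_zero fun i hi => by rw [hz i hi, zero_smul]]
    exact zero_mem _

end Aux

/-- the `𝔗`-module `M(V, a, d)` is irreducible if and only if the
`𝔗_{min(d 0, …, d (p-1))}`-module `V` is irreducible. -/
theorem thv_module_irreducible_iff (p : ℕ) (hp : 1 < p) (T : TwistedHV) (a : ℂ)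
    (h q : ℕ) (d : ℕ → ℕ) (hd : ∀ i, d i ≤ 1)
    (R : THVRep (dmin p d)) (hlev : R.AnnLevel h q)
    (ρ : T.T →ₗ⁅ℂ⁆ Module.End ℂ (ℤ →₀ R.V)) (hρ : IsTHVAction T p d a R ρ) :
    IsIrreducibleRep ρ ↔ R.IsSimple := by
  classical
  obtain ⟨hdmh, ⟨vI, hvI⟩, ⟨vL, hvL⟩, hIz, hLz⟩ := hlev
  obtain ⟨hact_L, hact_I, hact_CL, hact_CLI, hact_CI⟩ := hρ
  have hp0 : (0:ℕ) < p := by omega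
  have hpC : (p:ℂ) ≠ 0 := Nat.cast_ne_zero.mpr (by omega)
  have hfact : ∀ n : ℕ, ((n.factorial : ℂ)) ≠ 0 :=
    fun n => Nat.cast_ne_zero.mpr (Nat.factorial_ne_zero n)
  have hrange : (Finset.range p).Nonempty := ⟨0, Finset.mem_range.mpr hp0⟩
  have hdmin_def : dmin p d = (Finset.range p).inf' hrange d := by
    rw [dmin, finsetMin, dif_pos hrange]
  have hdmin_le : ∀ i, i < p → dmin p d ≤ d i := fun i hi =>
    hdmin_def ▸ Finset.inf'_le d (Finset.mem_range.mpr hi)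
  obtain ⟨i0, hi0p, hdi0⟩ : ∃ i0, i0 < p ∧ d i0 = dmin p d := by
    obtain ⟨i0, hi0, heq⟩ := Finset.exists_mem_eq_inf' hrange d
    exact ⟨i0, Finset.mem_range.mp hi0, (hdmin_def ▸ heq.symm : d i0 = dmin p d)⟩
  have hiltp : ∀ b : ℤ, ((b % (p:ℤ)).toNat) < p := by
    intro b
    have h1 : 0 ≤ b % (p:ℤ) := Int.emod_nonneg b (by exact_mod_cast hp0.ne')
    have h2 : b % (p:ℤ) < (p:ℤ) := Int.emod_lt_of_pos b (by exact_mod_cast hp0)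
    omega
  have hresi0 : ∀ m : ℕ, ((((i0:ℤ) + (p:ℤ)*(m:ℤ)) % (p:ℤ)).toNat) = i0 := by
    intro m
    have he : ((i0:ℤ) + (p:ℤ)*(m:ℤ)) % (p:ℤ) = (i0:ℤ) % (p:ℤ) := Int.add_mul_emod_self_left ..
    rw [he, Int.emod_eq_of_lt (by positivity) (by exact_mod_cast hi0p)]
    exact Int.toNat_natCast i0
  have hfinsum_mem : ∀ (Wb : Submodule ℂ (ℤ →₀ R.V)) (g : ℕ → (ℤ →₀ R.V)),
      (∀ j, g j ∈ Wb) → (∑ᶠ j, g j) ∈ Wb := by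
    intro Wb g hg
    by_cases hfin : (Function.support g).Finite
    · rw [finsum_eq_sum g hfin]; exact Submodule.sum_mem _ fun j _ => hg j
    · rw [finsum_of_infinite_support hfin]; exact zero_mem _
  constructor
  · -- forward direction
    intro hirr
    constructor
    · exact ⟨vI, fun hv => hvI (by rw [hv, map_zero])⟩
    · intro W' hL hI
      set Wb : Submodule ℂ (ℤ →₀ R.V) := ⨅ k : ℤ, Submodule.comap (Finsupp.lapply k) W' with hWb
      have hmemWb : ∀ f : ℤ →₀ R.V, f ∈ Wb ↔ ∀ k, f k ∈ W' := by
        intro f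
        simp [hWb, Submodule.mem_iInf, Submodule.mem_comap, Finsupp.lapply_apply]
      have hsingWb : ∀ (k : ℤ) (v : R.V), v ∈ W' → Finsupp.single k v ∈ Wb := by
        intro k v hv
        rw [hmemWb]
        intro n
        rcases eq_or_ne n k with rfl | hne
        · rw [Finsupp.single_eq_same]; exact hv
        · rw [Finsupp.single_eq_of_ne' (Ne.symm hne)]; exact zero_mem _
      have hsinginv : ∀ (x : T.T),
          (∀ (k:ℤ) (v:R.V), v ∈ W' → ρ x (Finsupp.single k v) ∈ Wb) →
          ∀ f ∈ Wb, ρ x f ∈ Wb := by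
        intro x hx f hf
        have hrep : f = ∑ k ∈ f.support, Finsupp.single k (f k) := by
          conv_lhs => rw [← Finsupp.sum_single f]
          rfl
        rw [hrep, map_sum]
        exact Submodule.sum_mem _ fun k _ => hx k (f k) ((hmemWb f).mp hf k)
      have hinvL : ∀ (m : ℤ), ∀ f ∈ Wb, ρ (T.L m) f ∈ Wb := by
        intro m
        refine hsinginv _ (fun k v hv => ?_)
        rw [hact_L m k v]
        refine add_mem (Submodule.smul_mem _ _ (hsingWb _ _ hv)) (hfinsum_mem Wb _ fun j => ?_)
        exact Submodule.smul_mem _ _ (hsingWb _ _ (hL j v hv))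
      have hinvI : ∀ (b : ℤ), ∀ f ∈ Wb, ρ (T.I b) f ∈ Wb := by
        intro b
        refine hsinginv _ (fun k v hv => ?_)
        rw [hact_I b k v]
        refine hfinsum_mem Wb _ fun j => Submodule.smul_mem _ _ (hsingWb _ _ ?_)
        exact hI _ (le_trans (hdmin_le _ (hiltp b)) (Nat.le_add_left _ _)) v hv
      have hinv : ∀ (x : T.T), ∀ f ∈ Wb, ρ x f ∈ Wb := by
        set Sinv : Submodule ℂ T.T :=
          { carrier := {x | ∀ f ∈ Wb, ρ x f ∈ Wb}
            add_mem' := fun {x} {y} hx hy f hf => by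
              rw [map_add, LinearMap.add_apply]
              exact add_mem (hx f hf) (hy f hf)
            zero_mem' := fun f hf => by
              rw [map_zero]; exact zero_mem _
            smul_mem' := fun c {x} hx f hf => by
              rw [map_smul, LinearMap.smul_apply]
              exact Submodule.smul_mem _ _ (hx f hf) } with hSinv
        have hbasis : ∀ idx, T.basis idx ∈ Sinv := by
          intro idx
          rw [T.basis_eq]
          rcases idx with n | idx
          · exact fun f hf => hinvL n f hf
          rcases idx with b | j
          · exact fun f hf => hinvI b f hf
          · fin_cases j
            · intro f hf
              show ρ T.CL f ∈ Wb
              rw [hact_CL]; exact zero_mem _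
            · intro f hf
              show ρ T.CLI f ∈ Wb
              rw [hact_CLI]; exact zero_mem _
            · intro f hf
              show ρ T.CI f ∈ Wb
              rw [hact_CI]; exact zero_mem _
        intro x
        have hx : x ∈ Submodule.span ℂ (Set.range T.basis) := by
          rw [Module.Basis.span_eq]; trivial
        exact Submodule.span_le.mpr (Set.range_subset_iff.mpr hbasis) hx
      rcases hirr.2 Wb hinv with hbot | htop
      · left
        rw [Submodule.eq_bot_iff]
        intro v hv
        have : Finsupp.single (0:ℤ) v ∈ Wb := hsingWb 0 v hv
        rw [hbot, Submodule.mem_bot] at this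
        exact (Finsupp.single_eq_zero).mp this
      · right
        rw [Submodule.eq_top_iff']
        intro v
        have : Finsupp.single (0:ℤ) v ∈ Wb := htop ▸ Submodule.mem_top
        have := (hmemWb _).mp this 0
        rwa [Finsupp.single_eq_same] at this
  · -- backward direction
    intro hsimp
    refine ⟨⟨Finsupp.single 0 vI, fun hz => hvI ?_⟩, ?_⟩
    · rw [Finsupp.single_eq_zero.mp hz, map_zero]
    intro W hW
    by_cases hbot : W = ⊥
    · exact Or.inl hbot
    right
    set U : ℤ → Submodule ℂ R.V :=
      fun k => Submodule.comap (Finsupp.lsingle k : R.V →ₗ[ℂ] (ℤ →₀ R.V)) W with hUdef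
    have memU : ∀ (k : ℤ) (v : R.V), v ∈ U k ↔ Finsupp.single k v ∈ W := by
      intro k v
      simp [hUdef, Submodule.mem_comap, Finsupp.lsingle_apply]
    have hsingle_sum : ∀ (n : ℤ) (s : Finset ℕ) (y : ℕ → R.V),
        Finsupp.single n (∑ j ∈ s, y j) = ∑ j ∈ s, Finsupp.single n (y j) := by
      intro n s y
      have h0 := map_sum (Finsupp.singleAddHom n : R.V →+ (ℤ →₀ R.V)) y s
      simpa only [Finsupp.singleAddHom_apply] using h0
    have hsmul_cancel : ∀ (Ut : Submodule ℂ R.V) (c : ℂ) (y : R.V),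
        c ≠ 0 → c • y ∈ Ut → y ∈ Ut := by
      intro Ut c y hc hcy
      have := Submodule.smul_mem Ut c⁻¹ hcy
      rwa [smul_smul, inv_mul_cancel₀ hc, one_smul] at this
    -- F1
    have hF1 : ∀ (k : ℤ) (v : R.V), Finsupp.single k v ∈ W → ∀ m : ℤ,
        Finsupp.single (m + k) ((a + (k:ℂ)) • v +
          ∑ j ∈ Finset.range (q+1),
            (((m:ℤ):ℂ)^(j+1) / (((j+1).factorial):ℂ)) • R.LV j v) ∈ W := by
      intro k v hv m
      have h1 := hW (T.L m) _ hv
      rw [hact_L m k v] at h1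
      have h2 : (∑ᶠ (j : ℕ), (((m:ℤ):ℂ) ^ (j + 1) / (((j+1).factorial):ℂ)) •
            Finsupp.single (m+k) (R.LV j v))
          = ∑ j ∈ Finset.range (q+1), (((m:ℤ):ℂ) ^ (j + 1) / (((j+1).factorial):ℂ)) •
            Finsupp.single (m+k) (R.LV j v) := by
        apply finsum_eq_finset_sum_of_support_subset
        intro j hj
        simp only [Function.mem_support] at hj
        simp only [Finset.coe_range, Set.mem_Iio]
        by_contra hc
        push_neg at hc
        exact hj (by rw [hLz j (by omega) v, Finsupp.single_zero, smul_zero])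
      rw [h2] at h1
      have h3 : Finsupp.single (m + k) ((a + (k:ℂ)) • v +
          ∑ j ∈ Finset.range (q+1), (((m:ℤ):ℂ)^(j+1) / (((j+1).factorial):ℂ)) • R.LV j v)
          = ((a + (k:ℂ)) • Finsupp.single (m+k) v) +
            ∑ j ∈ Finset.range (q+1), (((m:ℤ):ℂ) ^ (j + 1) / (((j+1).factorial):ℂ)) •
              Finsupp.single (m+k) (R.LV j v) := by
        rw [Finsupp.single_add, hsingle_sum]
        simp [Finsupp.smul_single]
      rw [h3]
      exact h1
    -- F2
    have hF2 : ∀ (k : ℤ) (v : R.V), Finsupp.single k v ∈ W → ∀ b : ℤ,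
        Finsupp.single (b + k) (∑ j ∈ Finset.range (h+1),
          ((b:ℂ)^(j + d ((b % (p:ℤ)).toNat)) / (((j + d ((b % (p:ℤ)).toNat)).factorial):ℂ)) •
            R.IV (j + d ((b % (p:ℤ)).toNat)) v) ∈ W := by
      intro k v hv b
      have h1 := hW (T.I b) _ hv
      rw [hact_I b k v] at h1
      have h2 : (∑ᶠ (j : ℕ), ((b:ℂ)^(j + d ((b % (p:ℤ)).toNat)) /
            (((j + d ((b % (p:ℤ)).toNat)).factorial):ℂ)) •
            Finsupp.single (b+k) (R.IV (j + d ((b % (p:ℤ)).toNat)) v))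
          = ∑ j ∈ Finset.range (h+1), ((b:ℂ)^(j + d ((b % (p:ℤ)).toNat)) /
            (((j + d ((b % (p:ℤ)).toNat)).factorial):ℂ)) •
            Finsupp.single (b+k) (R.IV (j + d ((b % (p:ℤ)).toNat)) v) := by
        apply finsum_eq_finset_sum_of_support_subset
        intro j hj
        simp only [Function.mem_support] at hj
        simp only [Finset.coe_range, Set.mem_Iio]
        by_contra hc
        push_neg at hc
        exact hj (by rw [hIz _ (by omega) v, Finsupp.single_zero, smul_zero])
      rw [h2] at h1
      have h3 : Finsupp.single (b + k) (∑ j ∈ Finset.range (h+1),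
          ((b:ℂ)^(j + d ((b % (p:ℤ)).toNat)) / (((j + d ((b % (p:ℤ)).toNat)).factorial):ℂ)) •
            R.IV (j + d ((b % (p:ℤ)).toNat)) v)
          = ∑ j ∈ Finset.range (h+1), ((b:ℂ)^(j + d ((b % (p:ℤ)).toNat)) /
            (((j + d ((b % (p:ℤ)).toNat)).factorial):ℂ)) •
            Finsupp.single (b+k) (R.IV (j + d ((b % (p:ℤ)).toNat)) v) := by
        rw [hsingle_sum]
        simp [Finsupp.smul_single]
      rw [h3]
      exact h1
    -- L0 diagonal action
    have hL0app : ∀ (w : ℤ →₀ R.V) (n : ℤ), (ρ (T.L 0) w) n = (a + (n:ℂ)) • w n := by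
      intro w
      induction w using Finsupp.induction_linear with
      | zero => intro n; simp
      | add f g hf hg =>
        intro n
        rw [map_add, Finsupp.add_apply, hf, hg, Finsupp.add_apply, smul_add]
      | single k v =>
        intro n
        rw [hact_L 0 k v]
        have hzero : ∀ j : ℕ, (((0:ℤ):ℂ) ^ (j + 1) / (((j+1).factorial):ℂ)) •
            Finsupp.single ((0:ℤ) + k) (R.LV j v) = 0 := by
          intro j
          rw [Int.cast_zero, zero_pow (Nat.succ_ne_zero j), zero_div, zero_smul]
        rw [finsum_congr hzero, finsum_zero, add_zero, zero_add]
        rcases eq_or_ne n k with rfl | hne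
        · simp
        · have h0 : ¬((0:ℤ) + k = n) := by omega
          simp [Finsupp.smul_apply, Finsupp.single_apply, h0, Ne.symm hne]
    -- components of elements of W are in W
    have hcomp : ∀ (w : ℤ →₀ R.V), w ∈ W → ∀ k, Finsupp.single k (w k) ∈ W := by
      suffices hN : ∀ (N : ℕ) (w : ℤ →₀ R.V), w ∈ W → w.support.card ≤ N →
          ∀ k, Finsupp.single k (w k) ∈ W by
        intro w hw k; exact hN w.support.card w hw le_rfl k
      intro N
      induction N with
      | zero =>
        intro w hw hcard k
        have hwz : w = 0 := by
          rwa [Nat.le_zero, Finset.card_eq_zero, Finsupp.support_eq_empty] at hcard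
        rw [hwz]
        simp only [Finsupp.coe_zero, Pi.zero_apply, Finsupp.single_zero]
        exact zero_mem _
      | succ N ih =>
        intro w hw hcard k
        by_cases hsub : ∃ k' ∈ w.support, k' ≠ k
        · obtain ⟨k', hk's, hk'ne⟩ := hsub
          set w' := ρ (T.L 0) w - (a + (k':ℂ)) • w with hw'def
          have hw' : w' ∈ W := sub_mem (hW _ _ hw) (Submodule.smul_mem _ _ hw)
          have happ : ∀ n : ℤ, w' n = ((n:ℂ) - (k':ℂ)) • w n := by
            intro n
            rw [hw'def, Finsupp.sub_apply, Finsupp.smul_apply, hL0app, ← sub_smul]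
            congr 1
            ring
          have hsupp : w'.support ⊆ w.support.erase k' := by
            intro n hn
            rw [Finsupp.mem_support_iff] at hn
            rw [Finset.mem_erase, Finsupp.mem_support_iff]
            constructor
            · rintro rfl
              apply hn
              rw [happ, sub_self, zero_smul]
            · intro hz
              apply hn
              rw [happ, hz, smul_zero]
          have hcard' : w'.support.card ≤ N := by
            calc w'.support.card ≤ (w.support.erase k').card := Finset.card_le_card hsupp
              _ = w.support.card - 1 := Finset.card_erase_of_mem hk's
              _ ≤ N := by omega
          have hkey := ih w' hw' hcard' k
          have hne0 : ((k:ℂ) - (k':ℂ)) ≠ 0 := by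
            rw [sub_ne_zero]
            intro hEq
            exact hk'ne (by exact_mod_cast hEq.symm)
          have hrw : Finsupp.single k (w k) = ((k:ℂ) - (k':ℂ))⁻¹ • Finsupp.single k (w' k) := by
            rw [happ k, Finsupp.smul_single, smul_smul, inv_mul_cancel₀ hne0, one_smul]
          rw [hrw]
          exact Submodule.smul_mem _ _ hkey
        · push_neg at hsub
          have hwk : w = Finsupp.single k (w k) := by
            ext n
            rcases eq_or_ne n k with rfl | hne
            · rw [Finsupp.single_eq_same]
            · rw [Finsupp.single_eq_of_ne' (Ne.symm hne)]
              by_contra hz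
              exact hne (hsub n (Finsupp.mem_support_iff.mpr hz))
          rw [← hwk]
          exact hw
    -- I-step values (residue i0)
    have hIvals : ∀ (k : ℤ) (v : R.V), Finsupp.single k v ∈ W → ∀ m : ℕ,
        Finsupp.single (((i0:ℤ) + (p:ℤ)*(m:ℤ)) + k)
          (∑ j ∈ Finset.range (h+1),
            (((i0:ℂ) + (p:ℂ)*(m:ℂ))^(j + (dmin p d)) / (((j + (dmin p d)).factorial):ℂ)) • R.IV (j + (dmin p d)) v) ∈ W := by
      intro k v hv m
      have h1 := hF2 k v hv ((i0:ℤ) + (p:ℤ)*(m:ℤ))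
      rw [hresi0 m, hdi0] at h1
      have hc : ((((i0:ℤ) + (p:ℤ)*(m:ℤ)):ℤ):ℂ) = (i0:ℂ) + (p:ℂ)*(m:ℂ) := by
        push_cast
        ring
      rw [hc] at h1
      exact h1
    -- generic coefficient extraction for the I-sums
    have hIcoeff : ∀ (Ut : Submodule ℂ R.V) (v : R.V),
        (∀ m : ℕ, (∑ j ∈ Finset.range (h+1),
          (((i0:ℂ) + (p:ℂ)*(m:ℂ))^(j + (dmin p d)) / (((j + (dmin p d)).factorial):ℂ)) • R.IV (j + (dmin p d)) v) ∈ Ut) →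
        ∀ l : ℕ, (dmin p d) ≤ l → R.IV l v ∈ Ut := by
      intro Ut v hvals l hl
      by_cases hlh : l ≤ h
      · have hx : Function.Injective (fun m : ℕ => (i0:ℂ) + (p:ℂ)*(m:ℂ)) := by
          intro m1 m2 hm
          simp only at hm
          have hm2 : (p:ℂ)*(m1:ℂ) = (p:ℂ)*(m2:ℂ) := by
            have := add_left_cancel hm
            exact this
          exact Nat.cast_injective (mul_left_cancel₀ hpC hm2)
        have hval' : ∀ m : ℕ, (∑ j ∈ Finset.range (h+1),
            ((Polynomial.C ((((j + (dmin p d)).factorial):ℂ))⁻¹ * Polynomial.X^(j + (dmin p d))).eval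
              ((i0:ℂ) + (p:ℂ)*(m:ℂ))) • R.IV (j + (dmin p d)) v) ∈ Ut := by
          intro m
          have heq : (∑ j ∈ Finset.range (h+1),
              ((Polynomial.C ((((j + (dmin p d)).factorial):ℂ))⁻¹ * Polynomial.X^(j + (dmin p d))).eval
                ((i0:ℂ) + (p:ℂ)*(m:ℂ))) • R.IV (j + (dmin p d)) v)
              = ∑ j ∈ Finset.range (h+1),
                (((i0:ℂ) + (p:ℂ)*(m:ℂ))^(j + (dmin p d)) / (((j + (dmin p d)).factorial):ℂ)) • R.IV (j + (dmin p d)) v := by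
            refine Finset.sum_congr rfl fun j _ => ?_
            rw [Polynomial.eval_mul, Polynomial.eval_C, Polynomial.eval_pow, Polynomial.eval_X,
              div_eq_mul_inv, mul_comm]
          rw [heq]
          exact hvals m
        have hmem := poly_mem Ut (Finset.range (h+1))
          (fun j => Polynomial.C ((((j + (dmin p d)).factorial):ℂ))⁻¹ * Polynomial.X^(j + (dmin p d)))
          (fun j => R.IV (j + (dmin p d)) v) _ hx hval' l
        have hsum : (∑ j ∈ Finset.range (h+1),
            ((Polynomial.C ((((j + (dmin p d)).factorial):ℂ))⁻¹ * Polynomial.X^(j + (dmin p d))).coeff l) •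
              R.IV (j + (dmin p d)) v)
            = ((l.factorial:ℂ))⁻¹ • R.IV l v := by
          rw [Finset.sum_eq_single (l - (dmin p d))]
          · rw [Polynomial.coeff_C_mul, Polynomial.coeff_X_pow]
            rw [if_pos (by omega), mul_one, Nat.sub_add_cancel hl]
          · intro j hj hne
            rw [Polynomial.coeff_C_mul, Polynomial.coeff_X_pow, if_neg (by omega), mul_zero,
              zero_smul]
          · intro hnot
            exact absurd (Finset.mem_range.mpr (by omega)) hnot
        rw [hsum] at hmem
        exact hsmul_cancel Ut _ _ (inv_ne_zero (hfact l)) hmem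
      · rw [hIz l (by omega) v]
        exact zero_mem _
    -- generic coefficient extraction for the L-sums
    have hLcoeff : ∀ (Ut : Submodule ℂ R.V) (v : R.V),
        (∀ m : ℕ, (∑ j ∈ Finset.range (q+1),
          (((m:ℕ):ℂ)^(j+1) / (((j+1).factorial):ℂ)) • R.LV j v) ∈ Ut) →
        ∀ l : ℕ, R.LV l v ∈ Ut := by
      intro Ut v hvals l
      by_cases hlq : l ≤ q
      · have hval' : ∀ m : ℕ, (∑ j ∈ Finset.range (q+1),
            ((Polynomial.C ((((j+1).factorial):ℂ))⁻¹ * Polynomial.X^(j+1)).eval ((m:ℕ):ℂ)) •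
              R.LV j v) ∈ Ut := by
          intro m
          have heq : (∑ j ∈ Finset.range (q+1),
              ((Polynomial.C ((((j+1).factorial):ℂ))⁻¹ * Polynomial.X^(j+1)).eval ((m:ℕ):ℂ)) •
                R.LV j v)
              = ∑ j ∈ Finset.range (q+1),
                  (((m:ℕ):ℂ)^(j+1) / (((j+1).factorial):ℂ)) • R.LV j v := by
            refine Finset.sum_congr rfl fun j _ => ?_
            rw [Polynomial.eval_mul, Polynomial.eval_C, Polynomial.eval_pow, Polynomial.eval_X,
              div_eq_mul_inv, mul_comm]
          rw [heq]
          exact hvals m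
        have hmem := poly_mem Ut (Finset.range (q+1))
          (fun j => Polynomial.C ((((j+1).factorial):ℂ))⁻¹ * Polynomial.X^(j+1))
          (fun j => R.LV j v) (fun m : ℕ => ((m:ℕ):ℂ))
          (fun m1 m2 hm => Nat.cast_injective hm) hval' (l+1)
        have hsum : (∑ j ∈ Finset.range (q+1),
            ((Polynomial.C ((((j+1).factorial):ℂ))⁻¹ * Polynomial.X^(j+1)).coeff (l+1)) •
              R.LV j v)
            = (((l+1).factorial:ℂ))⁻¹ • R.LV l v := by
          rw [Finset.sum_eq_single l]
          · rw [Polynomial.coeff_C_mul, Polynomial.coeff_X_pow, if_pos rfl, mul_one]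
          · intro j hj hne
            rw [Polynomial.coeff_C_mul, Polynomial.coeff_X_pow, if_neg (by omega), mul_zero,
              zero_smul]
          · intro hnot
            exact absurd (Finset.mem_range.mpr (by omega)) hnot
        rw [hsum] at hmem
        exact hsmul_cancel Ut _ _ (inv_ne_zero (hfact (l+1))) hmem
      · rw [hLz l (by omega) v]
        exact zero_mem _
    -- L-extraction into arbitrary U t for v lying in every U k
    have hLinf : ∀ (v : R.V), (∀ k : ℤ, v ∈ U k) → ∀ (t : ℤ) (l : ℕ), R.LV l v ∈ U t := by
      intro v hv t l
      refine hLcoeff (U t) v (fun m => ?_) l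
      have h1 := hF1 (t - (m:ℤ)) v ((memU _ v).mp (hv (t - (m:ℤ)))) (m:ℤ)
      rw [show (m:ℤ) + (t - (m:ℤ)) = t by ring] at h1
      have h2 := (memU t _).mpr h1
      have hcast : (((m:ℕ):ℤ):ℂ) = ((m:ℕ):ℂ) := by push_cast; ring
      rw [hcast] at h2
      have h3 : (∑ j ∈ Finset.range (q+1), (((m:ℕ):ℂ)^(j+1) / (((j+1).factorial):ℂ)) • R.LV j v)
          = ((a + ((t - (m:ℤ) : ℤ):ℂ)) • v +
              ∑ j ∈ Finset.range (q+1), (((m:ℕ):ℂ)^(j+1) / (((j+1).factorial):ℂ)) • R.LV j v)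
            - (a + ((t - (m:ℤ) : ℤ):ℂ)) • v := by abel
      rw [h3]
      exact sub_mem h2 (Submodule.smul_mem _ _ (hv t))
    -- I-extraction into arbitrary U t for v lying in every U k
    have hIinf : ∀ (v : R.V), (∀ k : ℤ, v ∈ U k) → ∀ (t : ℤ) (l : ℕ),
        dmin p d ≤ l → R.IV l v ∈ U t := by
      intro v hv t l hl
      refine hIcoeff (U t) v (fun m => ?_) l hl
      have h1 := hIvals (t - ((i0:ℤ) + (p:ℤ)*(m:ℤ))) v ((memU _ v).mp (hv _)) m
      rw [show (i0:ℤ) + (p:ℤ)*(m:ℤ) + (t - ((i0:ℤ) + (p:ℤ)*(m:ℤ))) = t by ring] at h1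
      exact (memU t _).mpr h1
    -- the submodule Y
    set Y : Submodule ℂ R.V := ⨆ k : ℤ, U k with hYdef
    have hUY : ∀ k, U k ≤ Y := fun k => le_iSup U k
    have hYL' : ∀ (l : ℕ), ∀ v ∈ Y, R.LV l v ∈ Y := by
      intro l
      have hcl : ∀ k : ℤ, U k ≤ Submodule.comap (R.LV l : R.V →ₗ[ℂ] R.V) Y := by
        intro k v hvk
        rw [Submodule.mem_comap]
        refine hLcoeff Y v (fun m => ?_) l
        have h1 := hF1 k v ((memU k v).mp hvk) (m:ℤ)
        have h2 := hUY _ ((memU _ _).mpr h1)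
        have hcast : (((m:ℕ):ℤ):ℂ) = ((m:ℕ):ℂ) := by push_cast; ring
        rw [hcast] at h2
        have h3 : (∑ j ∈ Finset.range (q+1), (((m:ℕ):ℂ)^(j+1) / (((j+1).factorial):ℂ)) • R.LV j v)
            = ((a + (k:ℂ)) • v +
                ∑ j ∈ Finset.range (q+1), (((m:ℕ):ℂ)^(j+1) / (((j+1).factorial):ℂ)) • R.LV j v)
              - (a + (k:ℂ)) • v := by abel
        rw [h3]
        exact sub_mem h2 (Submodule.smul_mem _ _ (hUY k hvk))
      intro v hvY
      exact Submodule.mem_comap.mp ((iSup_le hcl) hvY)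
    have hYI' : ∀ (l : ℕ), dmin p d ≤ l → ∀ v ∈ Y, R.IV l v ∈ Y := by
      intro l hl
      have hcl : ∀ k : ℤ, U k ≤ Submodule.comap (R.IV l : R.V →ₗ[ℂ] R.V) Y := by
        intro k v hvk
        rw [Submodule.mem_comap]
        refine hIcoeff Y v (fun m => ?_) l hl
        exact hUY _ ((memU _ _).mpr (hIvals k v ((memU k v).mp hvk) m))
      intro v hvY
      exact Submodule.mem_comap.mp ((iSup_le hcl) hvY)
    have hYtop : Y = ⊤ := by
      rcases hsimp.2 Y hYL' hYI' with hb | ht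
      · exfalso
        obtain ⟨w0, hw0W, hw0ne⟩ := (Submodule.ne_bot_iff W).mp hbot
        obtain ⟨k0, hk0⟩ : ∃ k0, w0 k0 ≠ 0 := by
          by_contra hc
          push_neg at hc
          apply hw0ne
          ext n
          simpa using hc n
        have hm := hUY k0 ((memU k0 _).mpr (hcomp w0 hw0W k0))
        rw [hb, Submodule.mem_bot] at hm
        exact hk0 hm
      · exact ht
    -- ker (IV h) = ⊥
    have hkerI : LinearMap.ker (R.IV h : R.V →ₗ[ℂ] R.V) = ⊥ := by
      have hcL : ∀ l : ℕ, ∀ v ∈ LinearMap.ker (R.IV h : R.V →ₗ[ℂ] R.V),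
          R.LV l v ∈ LinearMap.ker (R.IV h : R.V →ₗ[ℂ] R.V) := by
        intro l v hv
        rw [LinearMap.mem_ker] at hv ⊢
        have hbr := R.comm_LI l h hdmh
        rw [Ring.lie_def] at hbr
        have happ := DFunLike.congr_fun hbr v
        simp only [LinearMap.sub_apply, Module.End.mul_apply, LinearMap.smul_apply] at happ
        have hres : R.IV h (R.LV l v) = R.LV l (R.IV h v) - (h:ℂ) • R.IV (l+h) v := by
          rw [← happ]
          abel
        have hIlh : R.IV (l + h) v = 0 := by
          rcases Nat.eq_zero_or_pos l with rfl | hl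
          · rw [zero_add]
            exact hv
          · exact hIz (l+h) (by omega) v
        rw [hres, hv, map_zero, hIlh, smul_zero, sub_zero]
      have hcI : ∀ m : ℕ, dmin p d ≤ m → ∀ v ∈ LinearMap.ker (R.IV h : R.V →ₗ[ℂ] R.V),
          R.IV m v ∈ LinearMap.ker (R.IV h : R.V →ₗ[ℂ] R.V) := by
        intro m hm v hv
        rw [LinearMap.mem_ker] at hv ⊢
        have hbr := R.comm_II m h hm hdmh
        rw [Ring.lie_def] at hbr
        have happ := DFunLike.congr_fun hbr v
        simp only [LinearMap.sub_apply, Module.End.mul_apply, LinearMap.zero_apply] at happ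
        have hcomm : R.IV h (R.IV m v) = R.IV m (R.IV h v) := (sub_eq_zero.mp happ).symm
        rw [hcomm, hv, map_zero]
      rcases hsimp.2 _ hcL hcI with hb | ht
      · exact hb
      · exfalso
        have hmem : vI ∈ LinearMap.ker (R.IV h : R.V →ₗ[ℂ] R.V) := ht ▸ Submodule.mem_top
        exact hvI (LinearMap.mem_ker.mp hmem)
    -- the key two-step operator: IV h ∘ LV q maps every U k into every U t
    have hTheta : ∀ (k : ℤ) (v : R.V), v ∈ U k → ∀ t : ℤ, R.IV h (R.LV q v) ∈ U t := by
      intro k v hvk t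
      set L1 : Polynomial ℂ := Polynomial.C (p:ℂ) * Polynomial.X + Polynomial.C (i0:ℂ) with hL1
      set L2 : Polynomial ℂ :=
        Polynomial.C (-(p:ℂ)) * Polynomial.X +
          Polynomial.C ((t:ℂ) - (k:ℂ) - (i0:ℂ)) with hL2
      set g : ℕ × ℕ → Polynomial ℂ := fun jj =>
        (Polynomial.C ((((jj.1 + dmin p d).factorial):ℂ))⁻¹ * L1^(jj.1 + dmin p d)) *
        (if jj.2 = q+1 then Polynomial.C (a + (k:ℂ))
         else Polynomial.C ((((jj.2 + 1).factorial):ℂ))⁻¹ * L2^(jj.2 + 1)) with hg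
      set wv : ℕ × ℕ → R.V := fun jj =>
        if jj.2 = q+1 then R.IV (jj.1 + dmin p d) v
        else R.IV (jj.1 + dmin p d) (R.LV jj.2 v) with hwv
      set S : Finset (ℕ × ℕ) := Finset.range (h+1) ×ˢ Finset.range (q+2) with hS
      have hval : ∀ m : ℕ, (∑ jj ∈ S, (g jj).eval ((m:ℕ):ℂ) • wv jj) ∈ U t := by
        intro m
        set s : ℤ := t - (i0:ℤ) - (p:ℤ)*(m:ℤ) with hs
        have h1 := hF1 k v ((memU k v).mp hvk) (s - k)
        rw [show s - k + k = s by ring] at h1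
        have h2 := hIvals s _ h1 m
        rw [show (i0:ℤ) + (p:ℤ)*(m:ℤ) + s = t by rw [hs]; ring] at h2
        have h3 := (memU t _).mpr h2
        have heq : (∑ jj ∈ S, (g jj).eval ((m:ℕ):ℂ) • wv jj)
            = ∑ j ∈ Finset.range (h+1),
                (((i0:ℂ) + (p:ℂ)*(m:ℂ))^(j + dmin p d) / (((j + dmin p d).factorial):ℂ)) •
                R.IV (j + dmin p d) ((a + (k:ℂ)) • v +
                  ∑ j' ∈ Finset.range (q+1),
                    ((((s - k):ℤ):ℂ)^(j'+1) / (((j'+1).factorial):ℂ)) • R.LV j' v) := by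
          rw [hS, Finset.sum_product]
          refine Finset.sum_congr rfl fun j _ => ?_
          have hIVA : R.IV (j + dmin p d) ((a + (k:ℂ)) • v +
                ∑ j' ∈ Finset.range (q+1),
                  ((((s - k):ℤ):ℂ)^(j'+1) / (((j'+1).factorial):ℂ)) • R.LV j' v)
              = (a + (k:ℂ)) • R.IV (j + dmin p d) v +
                ∑ j' ∈ Finset.range (q+1),
                  ((((s - k):ℤ):ℂ)^(j'+1) / (((j'+1).factorial):ℂ)) •
                    R.IV (j + dmin p d) (R.LV j' v) := by
            rw [map_add, map_smul, map_sum]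
            simp_rw [map_smul]
          rw [hIVA, smul_add, Finset.smul_sum]
          rw [Finset.sum_range_succ]
          rw [add_comm]
          congr 1
          · simp only [hg, hwv, eq_self_iff_true, if_true]
            rw [smul_smul]
            congr 1
            simp only [hL1, hL2, Polynomial.eval_mul, Polynomial.eval_add, Polynomial.eval_pow,
              Polynomial.eval_C, Polynomial.eval_X]
            push_cast
            ring
          · refine Finset.sum_congr rfl fun j' hj' => ?_
            have hne : j' ≠ q+1 := by
              rw [Finset.mem_range] at hj'
              omega
            simp only [hg, hwv, if_neg hne]
            rw [smul_smul]
            congr 1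
            simp only [hL1, hL2, Polynomial.eval_mul, Polynomial.eval_add, Polynomial.eval_pow,
              Polynomial.eval_C, Polynomial.eval_X]
            rw [hs]
            push_cast
            ring
        rw [heq]
        exact h3
      have hmem := poly_mem (U t) S g wv (fun m : ℕ => ((m:ℕ):ℂ))
        (fun m1 m2 hm => Nat.cast_injective hm) hval (h + (q+1))
      have hL1deg : L1.natDegree = 1 := Polynomial.natDegree_linear hpC
      have hL2deg : L2.natDegree = 1 := Polynomial.natDegree_linear (neg_ne_zero.mpr hpC)
      have hL1lead : L1.leadingCoeff = (p:ℂ) := Polynomial.leadingCoeff_linear hpC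
      have hL2lead : L2.leadingCoeff = -(p:ℂ) := Polynomial.leadingCoeff_linear
        (neg_ne_zero.mpr hpC)
      have hdegb1 : ∀ (c : ℂ) (n : ℕ), (Polynomial.C c * L1^n).natDegree ≤ n := by
        intro c n
        refine le_trans Polynomial.natDegree_mul_le ?_
        rw [Polynomial.natDegree_C, Polynomial.natDegree_pow, hL1deg]
        omega
      have hdegb2 : ∀ (c : ℂ) (n : ℕ), (Polynomial.C c * L2^n).natDegree ≤ n := by
        intro c n
        refine le_trans Polynomial.natDegree_mul_le ?_
        rw [Polynomial.natDegree_C, Polynomial.natDegree_pow, hL2deg]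
        omega
      set c0 : ℂ := ((h.factorial:ℂ))⁻¹ * (((q+1).factorial:ℂ))⁻¹ *
        ((p:ℂ)^h * (-(p:ℂ))^(q+1)) with hc0
      have hsum : (∑ jj ∈ S, (g jj).coeff (h + (q+1)) • wv jj) = c0 • R.IV h (R.LV q v) := by
        rw [hS, Finset.sum_eq_single ((h - dmin p d, q) : ℕ × ℕ)]
        · have hfix : (h - dmin p d) + dmin p d = h := Nat.sub_add_cancel hdmh
          simp only [hg, hwv, if_neg (by omega : ¬(q = q+1)), hfix]
          have hrearr : (Polynomial.C ((h.factorial:ℂ))⁻¹ * L1^h) *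
              (Polynomial.C (((q+1).factorial:ℂ))⁻¹ * L2^(q+1))
              = Polynomial.C (((h.factorial:ℂ))⁻¹ * (((q+1).factorial:ℂ))⁻¹) *
                (L1^h * L2^(q+1)) := by
            rw [Polynomial.C_mul]
            ring
          rw [hrearr, Polynomial.coeff_C_mul]
          have hd1 : (L1^h).natDegree = h := by
            rw [Polynomial.natDegree_pow, hL1deg, mul_one]
          have hd2 : (L2^(q+1)).natDegree = q+1 := by
            rw [Polynomial.natDegree_pow, hL2deg, mul_one]
          have hcoefmul := Polynomial.coeff_mul_degree_add_degree (L1^h) (L2^(q+1))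
          rw [hd1, hd2] at hcoefmul
          rw [hcoefmul, Polynomial.leadingCoeff_pow, Polynomial.leadingCoeff_pow,
            hL1lead, hL2lead, hc0, mul_assoc]
        · rintro ⟨j, j'⟩ hjj hne
          rw [Finset.mem_product, Finset.mem_range, Finset.mem_range] at hjj
          by_cases hbig : h < j + dmin p d
          · have hwz : wv (j, j') = 0 := by
              simp only [hwv]
              split_ifs
              · exact hIz _ hbig _
              · exact hIz _ hbig _
            rw [hwz, smul_zero]
          · push_neg at hbig
            have hne' : ¬(j = h - dmin p d ∧ j' = q) := by
              intro ⟨e1, e2⟩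
              exact hne (by rw [e1, e2])
            have hcz : (g (j, j')).coeff (h + (q+1)) = 0 := by
              apply Polynomial.coeff_eq_zero_of_natDegree_lt
              simp only [hg]
              split_ifs with hq1
              · refine lt_of_le_of_lt (le_trans Polynomial.natDegree_mul_le ?_)
                  (by omega : j + dmin p d < h + (q+1))
                rw [Polynomial.natDegree_C, add_zero]
                exact hdegb1 _ _
              · have hj'q : j' ≤ q := by omega
                have hlt : (j + dmin p d) + (j' + 1) < h + (q+1) := by omega
                refine lt_of_le_of_lt (le_trans Polynomial.natDegree_mul_le ?_) hlt
                exact add_le_add (hdegb1 _ _) (hdegb2 _ _)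
            rw [hcz, zero_smul]
        · intro hnot
          exact absurd (Finset.mem_product.mpr
            ⟨Finset.mem_range.mpr (by omega), Finset.mem_range.mpr (by omega)⟩) hnot
      rw [hsum] at hmem
      have hc0ne : c0 ≠ 0 := by
        rw [hc0]
        refine mul_ne_zero (mul_ne_zero (inv_ne_zero (hfact h)) (inv_ne_zero (hfact (q+1)))) ?_
        exact mul_ne_zero (pow_ne_zero _ hpC) (pow_ne_zero _ (neg_ne_zero.mpr hpC))
      exact hsmul_cancel (U t) c0 _ hc0ne hmem
    -- Θ is everywhere defined into every U t
    have hThetaAll : ∀ (t : ℤ) (x : R.V), R.IV h (R.LV q x) ∈ U t := by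
      intro t x
      have hle : Y ≤ Submodule.comap
          ((R.IV h : R.V →ₗ[ℂ] R.V) ∘ₗ (R.LV q : R.V →ₗ[ℂ] R.V)) (U t) := by
        refine iSup_le fun k v hvk => ?_
        rw [Submodule.mem_comap, LinearMap.comp_apply]
        exact hTheta k v hvk t
      have hx : x ∈ Y := hYtop ▸ Submodule.mem_top
      have hm := hle hx
      rw [Submodule.mem_comap, LinearMap.comp_apply] at hm
      exact hm
    -- Θ applied to the witness is a nonzero vector of ⨅ U t
    have hvLI : R.IV h (R.LV q vL) ≠ 0 := by
      intro hz
      have hker : R.LV q vL ∈ LinearMap.ker (R.IV h : R.V →ₗ[ℂ] R.V) :=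
        LinearMap.mem_ker.mpr hz
      rw [hkerI, Submodule.mem_bot] at hker
      exact hvL hker
    have hUinfL : ∀ (l : ℕ), ∀ v ∈ (⨅ t : ℤ, U t), R.LV l v ∈ (⨅ t : ℤ, U t) := by
      intro l v hv
      have hvk : ∀ k, v ∈ U k := fun k => (Submodule.mem_iInf U).mp hv k
      exact (Submodule.mem_iInf U).mpr fun t => hLinf v hvk t l
    have hUinfI : ∀ (l : ℕ), dmin p d ≤ l → ∀ v ∈ (⨅ t : ℤ, U t),
        R.IV l v ∈ (⨅ t : ℤ, U t) := by
      intro l hl v hv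
      have hvk : ∀ k, v ∈ U k := fun k => (Submodule.mem_iInf U).mp hv k
      exact (Submodule.mem_iInf U).mpr fun t => hIinf v hvk t l hl
    rcases hsimp.2 _ hUinfL hUinfI with hb | ht
    · exfalso
      have hm : R.IV h (R.LV q vL) ∈ (⨅ t : ℤ, U t) :=
        (Submodule.mem_iInf U).mpr fun t => hThetaAll t vL
      rw [hb, Submodule.mem_bot] at hm
      exact hvLI hm
    · have hUtop : ∀ t : ℤ, U t = ⊤ := fun t => top_unique (ht ▸ iInf_le U t)
      rw [Submodule.eq_top_iff']
      intro f
      have hrep : f = ∑ k ∈ f.support, Finsupp.single k (f k) := by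
        conv_lhs => rw [← Finsupp.sum_single f]
        rfl
      rw [hrep]
      refine Submodule.sum_mem _ fun k _ => ?_
      exact (memU k (f k)).mp (hUtop k ▸ Submodule.mem_top)
end

section
/- Let a, b, c ∈ ℂ. Then the complex vector space with basis {v_k : k ∈ ℤ} carries a module structure over the twisted Heisenberg–Virasoro algebra 𝔗 determined by L_m · v_k = (a + k + bm) v_{m+k}, I_m · v_k = c v_{m+k}, and C_L, C_LI, C_I acting as 0, for all m, k ∈ ℤ (the module of intermediate series A_{a,b,c}). -/
open Finsupp TensorProduct

attribute [instance] LieRing.ofAssociativeRing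

/-- the module of intermediate series `A_{a,b,c}` over the twisted
Heisenberg-Virasoro algebra, on the space with basis `{v k : k ∈ ℤ}`. -/
theorem intermediate_series_thv (T : TwistedHV) (a b c : ℂ) :
    ∃ ρ : T.T →ₗ⁅ℂ⁆ Module.End ℂ (ℤ →₀ ℂ),
      (∀ m k : ℤ, ρ (T.L m) (Finsupp.single k (1 : ℂ)) =
        (a + (k : ℂ) + b * (m : ℂ)) • Finsupp.single (m + k) (1 : ℂ)) ∧
      (∀ m k : ℤ, ρ (T.I m) (Finsupp.single k (1 : ℂ)) =
        c • Finsupp.single (m + k) (1 : ℂ)) ∧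
      ρ T.CL = 0 ∧ ρ T.CLI = 0 ∧ ρ T.CI = 0 := by
  classical
  -- The action operators
  set A : ℤ → Module.End ℂ (ℤ →₀ ℂ) := fun m =>
    Finsupp.lsum ℂ (fun k : ℤ => (a + (k : ℂ) + b * (m : ℂ)) • Finsupp.lsingle (m + k)) with hA
  set B : ℤ → Module.End ℂ (ℤ →₀ ℂ) := fun m =>
    Finsupp.lsum ℂ (fun k : ℤ => c • Finsupp.lsingle (m + k)) with hB
  have hAs : ∀ (m k : ℤ) (x : ℂ),
      A m (Finsupp.single k x) = (a + (k : ℂ) + b * (m : ℂ)) • Finsupp.single (m + k) x := by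
    intro m k x
    rw [hA]
    simp only [Finsupp.lsum_single, LinearMap.smul_apply, Finsupp.lsingle_apply]
  have hBs : ∀ (m k : ℤ) (x : ℂ),
      B m (Finsupp.single k x) = c • Finsupp.single (m + k) x := by
    intro m k x
    rw [hB]
    simp only [Finsupp.lsum_single, LinearMap.smul_apply, Finsupp.lsingle_apply]
  -- commutator relations among the operators
  have keyAA : ∀ m n : ℤ, A m * A n - A n * A m = ((n : ℂ) - (m : ℂ)) • A (m + n) := by
    intro m n
    apply Finsupp.lhom_ext
    intro k x
    have h1 : m + (n + k) = m + n + k := by ring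
    have h2 : n + (m + k) = m + n + k := by ring
    simp only [LinearMap.sub_apply, Module.End.mul_apply,
      LinearMap.smul_apply, hAs, map_smul, smul_smul, h1, h2]
    rw [← sub_smul]
    congr 1
    push_cast
    ring
  have keyAB : ∀ m n : ℤ, A m * B n - B n * A m = (n : ℂ) • B (m + n) := by
    intro m n
    apply Finsupp.lhom_ext
    intro k x
    have h1 : m + (n + k) = m + n + k := by ring
    have h2 : n + (m + k) = m + n + k := by ring
    simp only [LinearMap.sub_apply, Module.End.mul_apply,
      LinearMap.smul_apply, hAs, hBs, map_smul, smul_smul, h1, h2]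
    rw [← sub_smul]
    congr 1
    push_cast
    ring
  have keyBB : ∀ m n : ℤ, B m * B n - B n * B m = 0 := by
    intro m n
    apply Finsupp.lhom_ext
    intro k x
    have h1 : m + (n + k) = n + (m + k) := by ring
    simp only [LinearMap.sub_apply, Module.End.mul_apply,
      LinearMap.smul_apply, hBs, map_smul, smul_smul, h1, LinearMap.zero_apply,
      sub_self, mul_comm]
  -- the linear map
  set f : T.T →ₗ[ℂ] Module.End ℂ (ℤ →₀ ℂ) :=
    T.basis.constr ℂ (Sum.elim A (Sum.elim B ![0, 0, 0])) with hf
  have hfL : ∀ m : ℤ, f (T.L m) = A m := by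
    intro m
    rw [show T.L m = T.basis (Sum.inl m) from (by rw [T.basis_eq]; rfl)]
    simp [hf]
  have hfI : ∀ m : ℤ, f (T.I m) = B m := by
    intro m
    rw [show T.I m = T.basis (Sum.inr (Sum.inl m)) by rw [T.basis_eq]; rfl]
    simp [hf]
  have hfCL : f T.CL = 0 := by
    rw [show T.CL = T.basis (Sum.inr (Sum.inr 0)) by rw [T.basis_eq]; rfl]
    simp [hf]
  have hfCLI : f T.CLI = 0 := by
    rw [show T.CLI = T.basis (Sum.inr (Sum.inr 1)) by rw [T.basis_eq]; rfl]
    simp [hf]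
  have hfCI : f T.CI = 0 := by
    rw [show T.CI = T.basis (Sum.inr (Sum.inr 2)) by rw [T.basis_eq]; rfl]
    simp [hf]
  -- brackets on basis elements
  have key : ∀ i j : ℤ ⊕ ℤ ⊕ Fin 3,
      f ⁅T.basis i, T.basis j⁆ =
        f (T.basis i) * f (T.basis j) - f (T.basis j) * f (T.basis i) := by
    have central : ∀ y : T.T, f ⁅T.CL, y⁆ = f T.CL * f y - f y * f T.CL ∧
        f ⁅T.CLI, y⁆ = f T.CLI * f y - f y * f T.CLI ∧
        f ⁅T.CI, y⁆ = f T.CI * f y - f y * f T.CI := by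
      intro y
      refine ⟨?_, ?_, ?_⟩
      · rw [T.central_CL, map_zero, hfCL, zero_mul, mul_zero]
        exact (sub_zero (0 : Module.End ℂ (ℤ →₀ ℂ))).symm
      · rw [T.central_CLI, map_zero, hfCLI, zero_mul, mul_zero]
        exact (sub_zero (0 : Module.End ℂ (ℤ →₀ ℂ))).symm
      · rw [T.central_CI, map_zero, hfCI, zero_mul, mul_zero]
        exact (sub_zero (0 : Module.End ℂ (ℤ →₀ ℂ))).symm
    have centralR : ∀ x : T.T, f ⁅x, T.CL⁆ = f x * f T.CL - f T.CL * f x ∧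
        f ⁅x, T.CLI⁆ = f x * f T.CLI - f T.CLI * f x ∧
        f ⁅x, T.CI⁆ = f x * f T.CI - f T.CI * f x := by
      intro x
      refine ⟨?_, ?_, ?_⟩
      · rw [← lie_skew, T.central_CL, neg_zero, map_zero, hfCL, zero_mul, mul_zero]
        exact (sub_zero (0 : Module.End ℂ (ℤ →₀ ℂ))).symm
      · rw [← lie_skew, T.central_CLI, neg_zero, map_zero, hfCLI, zero_mul, mul_zero]
        exact (sub_zero (0 : Module.End ℂ (ℤ →₀ ℂ))).symm
      · rw [← lie_skew, T.central_CI, neg_zero, map_zero, hfCI, zero_mul, mul_zero]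
        exact (sub_zero (0 : Module.End ℂ (ℤ →₀ ℂ))).symm
    have hfif : ∀ (P : Prop) [Decidable P] (z : ℂ) (w : T.T), f w = 0 →
        f (if P then z • w else 0) = 0 := by
      intro P _ z w hw
      split <;> simp [map_smul, hw]
    intro i j
    rcases i with m | i
    · rcases j with n | j
      · -- L L
        rw [T.basis_eq, T.basis_eq]
        simp only [Sum.elim_inl]
        rw [T.bracket_LL, map_add, map_smul, hfL, hfL, hfL, ← keyAA,
          hfif _ _ _ hfCL, add_zero]
      · rcases j with n | j
        · -- L I
          rw [T.basis_eq, T.basis_eq]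
          simp only [Sum.elim_inl, Sum.elim_inr]
          rw [T.bracket_LI, map_add, map_smul, hfL, hfI, hfI, ← keyAB,
            hfif _ _ _ hfCLI, add_zero]
        · -- L C
          rw [T.basis_eq, T.basis_eq]
          simp only [Sum.elim_inl, Sum.elim_inr]
          fin_cases j
          · exact (centralR (T.L m)).1
          · exact (centralR (T.L m)).2.1
          · exact (centralR (T.L m)).2.2
    · rcases i with m | i
      · rcases j with n | j
        · -- I L
          rw [T.basis_eq, T.basis_eq]
          simp only [Sum.elim_inl, Sum.elim_inr]
          rw [← lie_skew, map_neg, T.bracket_LI, map_add, map_smul, hfL, hfI, hfI,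
            hfif _ _ _ hfCLI, add_zero, ← keyAB, ← neg_sub (A n * B m) (B m * A n)]
        · rcases j with n | j
          · -- I I
            rw [T.basis_eq, T.basis_eq]
            simp only [Sum.elim_inr, Sum.elim_inl]
            rw [T.bracket_II, hfI, hfI]
            rw [show B m * B n - B n * B m = 0 from keyBB m n]
            split <;> simp [map_smul, hfCI]
          · -- I C
            rw [T.basis_eq, T.basis_eq]
            simp only [Sum.elim_inl, Sum.elim_inr]
            fin_cases j
            · exact (centralR (T.I m)).1
            · exact (centralR (T.I m)).2.1
            · exact (centralR (T.I m)).2.2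
      · -- C *
        rw [T.basis_eq]
        simp only [Sum.elim_inr]
        fin_cases i
        · exact (central (T.basis j)).1
        · exact (central (T.basis j)).2.1
        · exact (central (T.basis j)).2.2
  have hlie : ∀ x y : T.T, f ⁅x, y⁆ = f x * f y - f y * f x := by
    let P : T.T →ₗ[ℂ] T.T →ₗ[ℂ] Module.End ℂ (ℤ →₀ ℂ) :=
      LinearMap.mk₂ ℂ (fun x y => f ⁅x, y⁆)
        (fun x₁ x₂ y => by simp only [add_lie, map_add])
        (fun r x y => by simp only [smul_lie, map_smul])
        (fun x y₁ y₂ => by simp only [lie_add, map_add])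
        (fun r x y => by simp only [lie_smul, map_smul])
    let Q : T.T →ₗ[ℂ] T.T →ₗ[ℂ] Module.End ℂ (ℤ →₀ ℂ) :=
      LinearMap.mk₂ ℂ (fun x y => f x * f y - f y * f x)
        (fun x₁ x₂ y => by simp only [map_add, add_mul, mul_add]; abel)
        (fun r x y => by
          simp only [map_smul, smul_mul_assoc, mul_smul_comm]
          exact (smul_sub r (f x * f y) (f y * f x)).symm)
        (fun x y₁ y₂ => by simp only [map_add, add_mul, mul_add]; abel)
        (fun r x y => by
          simp only [map_smul, smul_mul_assoc, mul_smul_comm]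
          exact (smul_sub r (f x * f y) (f y * f x)).symm)
    have hPQ : P = Q := by
      apply T.basis.ext
      intro i
      apply T.basis.ext
      intro j
      exact key i j
    intro x y
    exact congrFun (congrArg DFunLike.coe (congrFun (congrArg DFunLike.coe hPQ) x)) y
  refine ⟨⟨f, fun {x y} =>
      (hlie x y).trans (LieRing.of_associative_ring_bracket (f x) (f y)).symm⟩,
    ?_, ?_, hfCL, hfCLI, hfCI⟩
  · intro m k
    show f (T.L m) (Finsupp.single k 1) = _
    rw [hfL, hAs]
  · intro m k
    show f (T.I m) (Finsupp.single k 1) = _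
    rw [hfI, hBs]
end

section
/- Let a, b, c ∈ ℂ, let P ⊆ {0,1,…,p−1} and let (d_1,…,d_{p−1}) ∈ {0,1}^{p−1} satisfy min{d_1,…,d_{p−1}} = 0 and the closure condition: (i+j) mod p ∈ P whenever j ∈ P and d_i = 0 (1 ≤ i ≤ p−1). Define F_{i,j} = c if d_i = 0 and j ∈ P, and F_{i,j} = 0 otherwise (1 ≤ i ≤ p−1, 0 ≤ j ≤ p−1). Then the complex vector space with basis {v_k : k ∈ 𝒫} carries a module structure over the gap-p Virasoro algebra 𝔤 determined by L_{pm} · v_k = (a + k + bpm) v_{pm+k}, I_{pm+i} · v_k = F_{i, k̄} v_{pm+i+k} for 1 ≤ i ≤ p−1, and all C_j acting as 0 (the module of intermediate series V(a,b,F)). -/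
open Finsupp TensorProduct

attribute [local instance 100] LieRing.ofAssociativeRing

section ISGAux

variable {p : ℕ} {P : Finset ℕ}

/-- The operator `L_{pm}` on the space with basis `{v_k : k ∈ 𝒫}`. -/
noncomputable def isgLop (p : ℕ) (P : Finset ℕ) (a b : ℂ) (m : ℤ) :
    Module.End ℂ (PIdx p P →₀ ℂ) :=
  Finsupp.lift (PIdx p P →₀ ℂ) ℂ (PIdx p P)
    (fun k => Finsupp.single (shiftIdx0 k m) (a + (k.1 : ℂ) + b * (p : ℂ) * (m : ℂ)))

/-- The operator `I_n` on the space with basis `{v_k : k ∈ 𝒫}`. -/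
noncomputable def isgIop (p : ℕ) (P : Finset ℕ) (c : ℂ) (d : ℕ → ℕ) (n : ℤ) :
    Module.End ℂ (PIdx p P →₀ ℂ) :=
  Finsupp.lift (PIdx p P →₀ ℂ) ℂ (PIdx p P)
    (fun k => if h : (((n + k.1) % (p : ℤ)).toNat) ∈ P then
        Finsupp.single (⟨n + k.1, h⟩ : PIdx p P)
          (if d ((n % (p : ℤ)).toNat) = 0 then c else 0)
      else 0)

@[simp] lemma isg_shiftIdx0_coe (k : PIdx p P) (m : ℤ) :
    (shiftIdx0 k m).1 = (p : ℤ) * m + k.1 := rfl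

@[simp] lemma isg_mk_coe (x : ℤ) (h : ((x % (p : ℤ)).toNat) ∈ P) :
    ((⟨x, h⟩ : PIdx p P) : ℤ) = x := rfl

lemma isgLop_single (a b : ℂ) (m : ℤ) (k : PIdx p P) (x : ℂ) :
    isgLop p P a b m (Finsupp.single k x) =
      Finsupp.single (shiftIdx0 k m) (x * (a + (k.1 : ℂ) + b * (p : ℂ) * (m : ℂ))) := by
  classical
  simp only [isgLop, Finsupp.lift_apply]
  rw [Finsupp.sum_single_index (by simp)]
  rw [Finsupp.smul_single, smul_eq_mul]

lemma isgIop_single (c : ℂ) (d : ℕ → ℕ) (n : ℤ) (k : PIdx p P) (x : ℂ) :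
    isgIop p P c d n (Finsupp.single k x) =
      if h : (((n + k.1) % (p : ℤ)).toNat) ∈ P then
        Finsupp.single (⟨n + k.1, h⟩ : PIdx p P)
          (x * (if d ((n % (p : ℤ)).toNat) = 0 then c else 0))
      else 0 := by
  classical
  simp only [isgIop, Finsupp.lift_apply]
  rw [Finsupp.sum_single_index (by simp)]
  split
  · exact Finsupp.smul_single _ _ _
  · exact smul_zero x

lemma isg_emod_shift (p : ℕ) (m x : ℤ) : ((p : ℤ) * m + x) % (p : ℤ) = x % (p : ℤ) := by
  rw [add_comm, mul_comm, Int.add_mul_emod_self_right]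

lemma isg_single_eqv {x y : ℤ} {hx : ((x % (p : ℤ)).toNat) ∈ P}
    (hy : ((y % (p : ℤ)).toNat) ∈ P) (hxy : x = y) {A B : ℂ} (hAB : A = B) :
    Finsupp.single (⟨x, hx⟩ : PIdx p P) A = Finsupp.single (⟨y, hy⟩ : PIdx p P) B := by
  subst hxy
  subst hAB
  rfl

lemma isg_bracket_def (x y : Module.End ℂ (PIdx p P →₀ ℂ)) : ⁅x, y⁆ = x * y - y * x := by
  ext v w
  rfl

lemma isg_shift_val (k : PIdx p P) (m : ℤ) :
    shiftIdx0 k m = ⟨(p : ℤ) * m + k.1, (shiftIdx0 k m).2⟩ := rfl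

lemma isg_comm_LL (a b : ℂ) (m n : ℤ) :
    ⁅isgLop p P a b m, isgLop p P a b n⁆ =
      ((p : ℂ) * ((n : ℂ) - (m : ℂ))) • isgLop p P a b (m + n) := by
  apply Finsupp.lhom_ext
  intro k x
  erw [isg_bracket_def]
  simp only [LinearMap.sub_apply, Module.End.mul_apply, LinearMap.smul_apply,
    isgLop_single, Finsupp.smul_single, smul_eq_mul, isg_shiftIdx0_coe]
  erw [isg_shift_val (shiftIdx0 k n) m, isg_shift_val (shiftIdx0 k m) n,
    isg_shift_val k (m + n)]
  simp only [isg_shiftIdx0_coe]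
  erw [isg_single_eqv ((shiftIdx0 k (m + n)).2) (show
      (p : ℤ) * m + ((p : ℤ) * n + k.1) = (p : ℤ) * (m + n) + k.1 by ring) rfl]
  erw [isg_single_eqv ((shiftIdx0 k (m + n)).2) (show
      (p : ℤ) * n + ((p : ℤ) * m + k.1) = (p : ℤ) * (m + n) + k.1 by ring) rfl]
  erw [← Finsupp.single_sub]
  congr 1
  push_cast
  ring

lemma isg_comm_LI (a b c : ℂ) (d : ℕ → ℕ) (m n : ℤ) :
    ⁅isgLop p P a b m, isgIop p P c d n⁆ = (n : ℂ) • isgIop p P c d ((p : ℤ) * m + n) := by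
  apply Finsupp.lhom_ext
  intro k x
  have e1 : ((p : ℤ) * m + n) % (p : ℤ) = n % (p : ℤ) := isg_emod_shift p m n
  have e2 : ((p : ℤ) * m + n + k.1) % (p : ℤ) = (n + k.1) % (p : ℤ) := by
    erw [add_assoc]; exact isg_emod_shift p m _
  have e3 : (n + ((p : ℤ) * m + k.1)) % (p : ℤ) = (n + k.1) % (p : ℤ) := by
    erw [show n + ((p : ℤ) * m + k.1) = (p : ℤ) * m + (n + k.1) by ring]
    exact isg_emod_shift p m _
  erw [isg_bracket_def]
  simp only [LinearMap.sub_apply, Module.End.mul_apply, LinearMap.smul_apply,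
    isgLop_single, isgIop_single, isg_shiftIdx0_coe, e1, e2, e3]
  by_cases h : (((n + k.1) % (p : ℤ)).toNat) ∈ P
  · simp only [dif_pos h]
    erw [dif_pos (show ((n + ((p : ℤ) * m + k.1)) % (p : ℤ)).toNat ∈ P by rw [e3]; exact h)]
    erw [isgLop_single]
    erw [isg_shift_val (⟨n + k.1, h⟩ : PIdx p P) m]
    simp only [isg_mk_coe, isg_shiftIdx0_coe, Finsupp.smul_single, smul_eq_mul]
    erw [isg_single_eqv (mem_shift h m) (show
        (p : ℤ) * m + (n + k.1) = (p : ℤ) * m + n + k.1 by ring) rfl]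
    erw [isg_single_eqv (mem_shift h m) (show
        n + ((p : ℤ) * m + k.1) = (p : ℤ) * m + n + k.1 by ring) rfl]
    erw [← Finsupp.single_sub]
    erw [Finsupp.smul_single, smul_eq_mul]
    exact isg_single_eqv (mem_shift h m) rfl (by push_cast; ring)
  · erw [dif_neg (show ¬ ((n + ((p : ℤ) * m + k.1)) % (p : ℤ)).toNat ∈ P by rw [e3]; exact h)]
    simp only [dif_neg h, sub_zero, smul_zero]
    show (isgLop p P a b m) 0 - 0 = (n : ℂ) • (0 : PIdx p P →₀ ℂ)
    rw [map_zero, sub_zero, smul_zero]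

lemma isg_key_mem (hp : 1 < p) (d : ℕ → ℕ)
    (hclo : ∀ i : ℕ, 1 ≤ i → i ≤ p - 1 → d i = 0 →
      ∀ j ∈ P, ((((i : ℤ) + (j : ℤ)) % (p : ℤ)).toNat) ∈ P)
    {m : ℤ} (hm : ¬ ((p : ℤ) ∣ m)) (hdm : d ((m % (p : ℤ)).toNat) = 0)
    {x : ℤ} (hx : ((x % (p : ℤ)).toNat) ∈ P) :
    (((m + x) % (p : ℤ)).toNat) ∈ P := by
  have hp0 : (0 : ℤ) < (p : ℤ) := by exact_mod_cast Nat.zero_lt_of_lt hp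
  have hm1 : 0 ≤ m % (p : ℤ) := Int.emod_nonneg m (by omega)
  have hm2 : m % (p : ℤ) < (p : ℤ) := Int.emod_lt_of_pos m hp0
  have hmne : m % (p : ℤ) ≠ 0 := fun h => hm (Int.dvd_of_emod_eq_zero h)
  have hx1 : 0 ≤ x % (p : ℤ) := Int.emod_nonneg x (by omega)
  set i : ℕ := (m % (p : ℤ)).toNat with hi
  set j : ℕ := (x % (p : ℤ)).toNat with hj
  have hii : (i : ℤ) = m % (p : ℤ) := Int.toNat_of_nonneg hm1
  have hjj : (j : ℤ) = x % (p : ℤ) := Int.toNat_of_nonneg hx1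
  have h1 : 1 ≤ i := by omega
  have h2 : i ≤ p - 1 := by omega
  have := hclo i h1 h2 hdm j hx
  rwa [hii, hjj, show (m % (p:ℤ) + x % (p:ℤ)) % (p:ℤ) = (m + x) % (p:ℤ) from
    (Int.add_emod m x (p:ℤ)).symm] at this

lemma isg_comm_II (hp : 1 < p) (c : ℂ) (d : ℕ → ℕ)
    (hclo : ∀ i : ℕ, 1 ≤ i → i ≤ p - 1 → d i = 0 →
      ∀ j ∈ P, ((((i : ℤ) + (j : ℤ)) % (p : ℤ)).toNat) ∈ P)
    {m n : ℤ} (hm : ¬ ((p : ℤ) ∣ m)) (hn : ¬ ((p : ℤ) ∣ n)) :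
    ⁅isgIop p P c d m, isgIop p P c d n⁆ = 0 := by
  apply Finsupp.lhom_ext
  intro k x
  erw [isg_bracket_def]
  simp only [LinearMap.sub_apply, Module.End.mul_apply, LinearMap.zero_apply, isgIop_single]
  by_cases hdm : d ((m % (p : ℤ)).toNat) = 0
  · by_cases hdn : d ((n % (p : ℤ)).toNat) = 0
    · have q1 : (((n + k.1) % (p : ℤ)).toNat) ∈ P := isg_key_mem hp d hclo hn hdn k.2
      have q2 : (((m + (n + k.1)) % (p : ℤ)).toNat) ∈ P :=
        isg_key_mem hp d hclo hm hdm q1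
      have q3 : (((m + k.1) % (p : ℤ)).toNat) ∈ P := isg_key_mem hp d hclo hm hdm k.2
      have q4 : (((n + (m + k.1)) % (p : ℤ)).toNat) ∈ P :=
        isg_key_mem hp d hclo hn hdn q3
      erw [dif_pos q1, dif_pos q3, isgIop_single, isgIop_single]
      simp only [isg_mk_coe]
      erw [dif_pos q2, dif_pos q4]
      erw [isg_single_eqv q4 (show m + (n + k.1) = n + (m + k.1) by ring) rfl]
      erw [sub_eq_zero]
      congr 1
      ring
    · erw [if_neg hdn]
      by_cases q1 : (((n + k.1) % (p : ℤ)).toNat) ∈ P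
      · erw [dif_pos q1, mul_zero, Finsupp.single_zero, map_zero, zero_sub, neg_eq_zero]
        by_cases q3 : (((m + k.1) % (p : ℤ)).toNat) ∈ P
        · erw [dif_pos q3, isgIop_single]
          by_cases q4 : (((n + (⟨m + k.1, q3⟩ : PIdx p P).1) % (p : ℤ)).toNat) ∈ P
          · rw [dif_pos q4, if_neg hdn, mul_zero, Finsupp.single_zero]; rfl
          · rw [dif_neg q4]; rfl
        · erw [dif_neg q3, map_zero]
      · erw [dif_neg q1, map_zero, zero_sub, neg_eq_zero]
        by_cases q3 : (((m + k.1) % (p : ℤ)).toNat) ∈ P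
        · erw [dif_pos q3, isgIop_single]
          by_cases q4 : (((n + (⟨m + k.1, q3⟩ : PIdx p P).1) % (p : ℤ)).toNat) ∈ P
          · rw [dif_pos q4, if_neg hdn, mul_zero, Finsupp.single_zero]; rfl
          · rw [dif_neg q4]; rfl
        · erw [dif_neg q3, map_zero]
  · erw [if_neg hdm]
    by_cases q3 : (((m + k.1) % (p : ℤ)).toNat) ∈ P
    · erw [dif_pos q3, mul_zero, Finsupp.single_zero, map_zero, sub_zero]
      by_cases q1 : (((n + k.1) % (p : ℤ)).toNat) ∈ P
      · erw [dif_pos q1, isgIop_single]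
        by_cases q2 : (((m + (⟨n + k.1, q1⟩ : PIdx p P).1) % (p : ℤ)).toNat) ∈ P
        · rw [dif_pos q2, if_neg hdm, mul_zero, Finsupp.single_zero]; rfl
        · rw [dif_neg q2]; rfl
      · erw [dif_neg q1, map_zero]
    · erw [dif_neg q3, map_zero, sub_zero]
      by_cases q1 : (((n + k.1) % (p : ℤ)).toNat) ∈ P
      · erw [dif_pos q1, isgIop_single]
        by_cases q2 : (((m + (⟨n + k.1, q1⟩ : PIdx p P).1) % (p : ℤ)).toNat) ∈ P
        · rw [dif_pos q2, if_neg hdm, mul_zero, Finsupp.single_zero]; rfl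
        · rw [dif_neg q2]; rfl
      · erw [dif_neg q1, map_zero]

end ISGAux

/-- the module of intermediate series `V(a, b, F)` over the gap-`p`
Virasoro algebra, on the space with basis `{v k : k ∈ 𝒫}`, where
`F i j = c` if `d i = 0` and `j ∈ P`, and `F i j = 0` otherwise. -/
theorem intermediate_series_gap (p : ℕ) (hp : 1 < p) (G : GapVirasoro p) (a b c : ℂ)
    (P : Finset ℕ) (hPsub : P ⊆ Finset.range p)
    (d : ℕ → ℕ) (hd : ∀ i, 1 ≤ i → i ≤ p - 1 → d i ≤ 1)
    (hmin : ∃ i, 1 ≤ i ∧ i ≤ p - 1 ∧ d i = 0)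
    (hclo : ∀ i : ℕ, 1 ≤ i → i ≤ p - 1 → d i = 0 →
      ∀ j ∈ P, ((((i : ℤ) + (j : ℤ)) % (p : ℤ)).toNat) ∈ P) :
    ∃ ρ : G.g →ₗ⁅ℂ⁆ Module.End ℂ (PIdx p P →₀ ℂ),
      (∀ (m : ℤ) (k : PIdx p P),
        ρ (G.Lg m) (Finsupp.single k (1 : ℂ)) =
          (a + (k.1 : ℂ) + b * (p : ℂ) * (m : ℂ)) • Finsupp.single (shiftIdx0 k m) (1 : ℂ)) ∧
      (∀ (m : ℤ) (i : ℕ), 1 ≤ i → i ≤ p - 1 → ∀ k : PIdx p P,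
        ρ (G.Ig ((p : ℤ) * m + (i : ℤ))) (Finsupp.single k (1 : ℂ)) =
          if h : ((((i : ℤ) + k.1) % (p : ℤ)).toNat) ∈ P then
            (if d i = 0 then c else 0) •
              Finsupp.single (⟨(p : ℤ) * m + (i : ℤ) + k.1, mem_shift h m⟩ : PIdx p P) (1 : ℂ)
          else 0) ∧
      (∀ j : ℕ, j ≤ p / 2 → ρ (G.Cg j) = 0) := by
    classical
  set V := (PIdx p P →₀ ℂ)
  let f : (ℤ ⊕ {m : ℤ // ¬ ((p : ℤ) ∣ m)} ⊕ {j : ℕ // j ≤ p / 2}) → Module.End ℂ V :=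
    Sum.elim (fun m => isgLop p P a b m)
      (Sum.elim (fun m => isgIop p P c d m.1) (fun _ => 0))
  let ρ₀ : G.g →ₗ[ℂ] Module.End ℂ V := G.basis.constr ℂ f
  have hL : ∀ m : ℤ, ρ₀ (G.Lg m) = isgLop p P a b m := by
    intro m
    have e : G.basis (Sum.inl m) = G.Lg m := G.basis_eq _
    rw [← e]
    exact G.basis.constr_basis ℂ f (Sum.inl m)
  have hI : ∀ (n : ℤ) (hn : ¬ ((p : ℤ) ∣ n)), ρ₀ (G.Ig n) = isgIop p P c d n := by
    intro n hn
    have e : G.basis (Sum.inr (Sum.inl ⟨n, hn⟩)) = G.Ig n := G.basis_eq _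
    rw [← e]
    exact G.basis.constr_basis ℂ f (Sum.inr (Sum.inl ⟨n, hn⟩))
  have hC : ∀ j : ℕ, j ≤ p / 2 → ρ₀ (G.Cg j) = 0 := by
    intro j hj
    have e : G.basis (Sum.inr (Sum.inr ⟨j, hj⟩)) = G.Cg j := G.basis_eq _
    rw [← e]
    exact G.basis.constr_basis ℂ f (Sum.inr (Sum.inr ⟨j, hj⟩))
  have keyLL : ∀ m n : ℤ, ρ₀ ⁅G.Lg m, G.Lg n⁆ = ⁅ρ₀ (G.Lg m), ρ₀ (G.Lg n)⁆ := by
    intro m n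
    rw [G.bracket_LL, map_add, map_smul, hL, hL, hL, isg_comm_LL]
    by_cases h0 : m + n = 0
    · rw [if_pos h0, map_smul, hC 0 (Nat.zero_le _), smul_zero, add_zero]
    · rw [if_neg h0, map_zero, add_zero]
  have keyLI : ∀ (m n : ℤ), ¬ ((p : ℤ) ∣ n) →
      ρ₀ ⁅G.Lg m, G.Ig n⁆ = ⁅ρ₀ (G.Lg m), ρ₀ (G.Ig n)⁆ := by
    intro m n hn
    have hn' : ¬ ((p : ℤ) ∣ ((p : ℤ) * m + n)) := by
      intro h
      exact hn ((dvd_add_right ⟨m, rfl⟩).mp h)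
    rw [G.bracket_LI m n hn, map_smul, hI _ hn', hL, hI _ hn, isg_comm_LI]
  have keyII : ∀ (m n : ℤ), ¬ ((p : ℤ) ∣ m) → ¬ ((p : ℤ) ∣ n) →
      ρ₀ ⁅G.Ig m, G.Ig n⁆ = ⁅ρ₀ (G.Ig m), ρ₀ (G.Ig n)⁆ := by
    intro m n hm hn
    rw [hI _ hm, hI _ hn, isg_comm_II hp c d hclo hm hn, G.bracket_II m n hm hn]
    by_cases h0 : m + n = 0
    · rw [if_pos h0, map_smul]
      have hp0 : (0 : ℤ) < (p : ℤ) := by exact_mod_cast Nat.zero_lt_of_lt hp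
      have h1 : 0 ≤ m % (p : ℤ) := Int.emod_nonneg m (by omega)
      have h2 : m % (p : ℤ) < (p : ℤ) := Int.emod_lt_of_pos m hp0
      have h3 : (m % (p : ℤ)).toNat ≤ p := by omega
      have h4 : min ((m % (p : ℤ)).toNat) (p - (m % (p : ℤ)).toNat) ≤ p / 2 := by omega
      rw [hC _ h4, smul_zero]
    · rw [if_neg h0, map_zero]
  have keyC : ∀ (j : ℕ), j ≤ p / 2 → ∀ x : G.g,
      ρ₀ ⁅G.Cg j, x⁆ = ⁅ρ₀ (G.Cg j), ρ₀ x⁆ := by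
    intro j hj x
    rw [G.central_C j hj, map_zero, hC j hj]
    rw [isg_bracket_def]
    ext v w
    simp
  have hskew : ∀ x y : G.g, ρ₀ ⁅x, y⁆ = ⁅ρ₀ x, ρ₀ y⁆ → ρ₀ ⁅y, x⁆ = ⁅ρ₀ y, ρ₀ x⁆ := by
    intro x y h
    rw [← lie_skew y x, map_neg, h, lie_skew]
  have key : ∀ i j, ρ₀ ⁅G.basis i, G.basis j⁆ = ⁅ρ₀ (G.basis i), ρ₀ (G.basis j)⁆ := by
    rintro (m | ⟨n, hn⟩ | ⟨j, hj⟩) (m' | ⟨n', hn'⟩ | ⟨j', hj'⟩) <;>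
      simp only [G.basis_eq, Sum.elim_inl, Sum.elim_inr]
    · exact keyLL m m'
    · exact keyLI m n' hn'
    · exact hskew _ _ (keyC j' hj' _)
    · exact hskew _ _ (keyLI m' n hn)
    · exact keyII n n' hn hn'
    · exact hskew _ _ (keyC j' hj' _)
    · exact keyC j hj _
    · exact keyC j hj _
    · exact keyC j hj _
  have hbr : ∀ x y : G.g, ρ₀ ⁅x, y⁆ = ⁅ρ₀ x, ρ₀ y⁆ := by
    let B : G.g →ₗ[ℂ] G.g →ₗ[ℂ] Module.End ℂ V :=
      LinearMap.mk₂ ℂ (fun x y => ρ₀ ⁅x, y⁆)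
        (fun x x' y => by simp only [add_lie, map_add])
        (fun r x y => by simp only [smul_lie, map_smul])
        (fun x y y' => by simp only [lie_add, map_add])
        (fun r x y => by simp only [lie_smul, map_smul])
    let C : G.g →ₗ[ℂ] G.g →ₗ[ℂ] Module.End ℂ V :=
      LinearMap.mk₂ ℂ (fun x y => ⁅ρ₀ x, ρ₀ y⁆)
        (fun x x' y => by
          rw [map_add, isg_bracket_def, isg_bracket_def, isg_bracket_def]
          simp only [add_mul, mul_add]
          abel)
        (fun r x y => by
          rw [map_smul, isg_bracket_def, isg_bracket_def]
          simp only [smul_mul_assoc,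
            mul_smul_comm, smul_sub]
          exact (smul_sub r (ρ₀ x * ρ₀ y) (ρ₀ y * ρ₀ x)).symm)
        (fun x y y' => by
          rw [map_add, isg_bracket_def, isg_bracket_def, isg_bracket_def]
          simp only [add_mul, mul_add]
          abel)
        (fun r x y => by
          rw [map_smul, isg_bracket_def, isg_bracket_def]
          simp only [smul_mul_assoc,
            mul_smul_comm, smul_sub]
          exact (smul_sub r (ρ₀ x * ρ₀ y) (ρ₀ y * ρ₀ x)).symm)
    have hBC : B = C := by
      apply G.basis.ext
      intro i
      apply G.basis.ext
      intro j
      exact key i j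
    intro x y
    exact DFunLike.congr_fun (DFunLike.congr_fun hBC x) y
  refine ⟨{ toLinearMap := ρ₀, map_lie' := hbr _ _ }, ?_, ?_, ?_⟩
  · intro m k
    show ρ₀ (G.Lg m) (Finsupp.single k 1) = _
    rw [hL, isgLop_single, one_mul, Finsupp.smul_single, smul_eq_mul, mul_one]
  · intro m i hi1 hi2 k
    have hip : i < p := by omega
    have hnd : ¬ ((p : ℤ) ∣ ((p : ℤ) * m + (i : ℤ))) := by
      intro h
      have h2 : (p : ℤ) ∣ (i : ℤ) := (dvd_add_right ⟨m, rfl⟩).mp h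
      have h3 : p ∣ i := Int.ofNat_dvd.mp h2
      have := Nat.le_of_dvd (by omega) h3
      omega
    show ρ₀ (G.Ig _) (Finsupp.single k 1) = _
    rw [hI _ hnd, isgIop_single]
    have e1 : ((p : ℤ) * m + (i : ℤ)) % (p : ℤ) = (i : ℤ) := by
      rw [isg_emod_shift]
      exact Int.emod_eq_of_lt (by positivity) (by exact_mod_cast hip)
    have e2 : ((p : ℤ) * m + (i : ℤ) + k.1) % (p : ℤ) = ((i : ℤ) + k.1) % (p : ℤ) := by
      rw [add_assoc]
      exact isg_emod_shift p m _
    simp only [e1, e2, Int.toNat_natCast, one_mul]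
    split
    · rw [Finsupp.smul_single, smul_eq_mul, mul_one]
    · rfl
  · intro j hj
    show ρ₀ (G.Cg j) = 0
    exact hC j hj
end
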